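/- arXiv:1508.01928 — 4 statements merged into one kernel-verified Lean document; each statement's English description precedes it below -/
import Mathlib

section
/- Let μ be a Borel probability measure on ℝ^N with finite second moment. Then the k-means functional F_{μ,k}(z_1,...,z_k) = ∫ d(x, {z_1,...,z_k})² dμ(x) attains its minimum over (ℝ^N)^k. -/
open MeasureTheory Filter Topology
open scoped ENNReal


section helpers
variable {N k : ℕ}

private lemma iInf_dist_nonneg [Nonempty (Fin k)] (w : Fin k → EuclideanSpace ℝ (Fin N))
    (x : EuclideanSpace ℝ (Fin N)) : 0 ≤ ⨅ i, dist x (w i) :=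
  Real.iInf_nonneg fun _ => dist_nonneg

private lemma bddBelow_dist (w : Fin k → EuclideanSpace ℝ (Fin N))
    (x : EuclideanSpace ℝ (Fin N)) : BddBelow (Set.range fun i => dist x (w i)) :=
  ⟨0, by rintro y ⟨i, rfl⟩; exact dist_nonneg⟩

private lemma cont_iInf_dist (hk : 0 < k) (w : Fin k → EuclideanSpace ℝ (Fin N)) :
    Continuous fun x => ⨅ i, dist x (w i) := by
  have : Nonempty (Fin k) := Fin.pos_iff_nonempty.1 hk
  have heq : (fun x => ⨅ i, dist x (w i)) =
      fun x => Finset.univ.inf' Finset.univ_nonempty (fun i => dist x (w i)) := by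
    funext x; rw [Finset.inf'_univ_eq_ciInf]
  rw [heq]
  exact continuous_iff_continuousAt.2 fun x =>
    ContinuousAt.finset_inf'_apply _ fun i _ =>
      ((continuous_id.dist continuous_const).continuousAt)

private lemma integrable_norm_of_sq {μ : Measure (EuclideanSpace ℝ (Fin N))}
    [IsProbabilityMeasure μ] (h2 : Integrable (fun x => ‖x‖ ^ 2) μ) :
    Integrable (fun x : EuclideanSpace ℝ (Fin N) => ‖x‖) μ := by
  refine (h2.add (integrable_const 1)).mono' continuous_norm.aestronglyMeasurable
    (ae_of_all _ fun x => ?_)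
  rw [Real.norm_eq_abs, abs_of_nonneg (norm_nonneg x)]
  simp only [Pi.add_apply]
  nlinarith [sq_nonneg (‖x‖ - 1), norm_nonneg x]

private lemma integrable_bound {μ : Measure (EuclideanSpace ℝ (Fin N))}
    [IsProbabilityMeasure μ] (h2 : Integrable (fun x => ‖x‖ ^ 2) μ) (C : ℝ) :
    Integrable (fun x : EuclideanSpace ℝ (Fin N) => (‖x‖ + C) ^ 2) μ := by
  have heq : (fun x : EuclideanSpace ℝ (Fin N) => (‖x‖ + C) ^ 2) =
      fun x => ‖x‖ ^ 2 + ((2 * C) * ‖x‖ + C ^ 2) := by funext x; ring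
  rw [heq]
  exact h2.add (((integrable_norm_of_sq h2).const_mul _).add (integrable_const _))

private lemma g_integrable (hk : 0 < k) {μ : Measure (EuclideanSpace ℝ (Fin N))}
    [IsProbabilityMeasure μ] (h2 : Integrable (fun x => ‖x‖ ^ 2) μ)
    (w : Fin k → EuclideanSpace ℝ (Fin N)) :
    Integrable (fun x => (⨅ i, dist x (w i)) ^ 2) μ := by
  have : Nonempty (Fin k) := Fin.pos_iff_nonempty.1 hk
  set i0 : Fin k := ⟨0, hk⟩
  refine (integrable_bound h2 ‖w i0‖).mono'
    ((cont_iInf_dist hk w).pow 2).aestronglyMeasurable (ae_of_all _ fun x => ?_)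
  rw [Real.norm_eq_abs, abs_of_nonneg (by positivity)]
  have h1 : ⨅ i, dist x (w i) ≤ dist x (w i0) := ciInf_le (bddBelow_dist w x) i0
  have h2' : dist x (w i0) ≤ ‖x‖ + ‖w i0‖ := dist_le_norm_add_norm _ _
  have h0 : 0 ≤ ⨅ i, dist x (w i) := iInf_dist_nonneg w x
  nlinarith [norm_nonneg x, norm_nonneg (w i0)]

end helpers

/-- The k-means functional `F_{μ,k}(z) = ∫ d(x, {z_1,…,z_k})² dμ(x)` of a Borel probability
measure with finite second moment attains its minimum over `(ℝ^N)^k`. -/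
theorem kmeans_min_exists (N k : ℕ) (hk : 0 < k)
    (μ : Measure (EuclideanSpace ℝ (Fin N))) [IsProbabilityMeasure μ]
    (h2 : Integrable (fun x => ‖x‖ ^ 2) μ) :
    ∃ z : Fin k → EuclideanSpace ℝ (Fin N),
      ∀ w : Fin k → EuclideanSpace ℝ (Fin N),
        ∫ x, (⨅ i, dist x (z i)) ^ 2 ∂μ ≤ ∫ x, (⨅ i, dist x (w i)) ^ 2 ∂μ := by
  classical
  have hne : Nonempty (Fin k) := Fin.pos_iff_nonempty.1 hk
  set E := EuclideanSpace ℝ (Fin N) with hE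
  set F : (Fin k → E) → ℝ := fun w => ∫ x, (⨅ i, dist x (w i)) ^ 2 ∂μ with hF
  have hF0 : ∀ w, 0 ≤ F w := fun w => integral_nonneg fun x => by positivity
  have hbddF : BddBelow (Set.range F) := ⟨0, by rintro y ⟨w, rfl⟩; exact hF0 w⟩
  have hrne : (Set.range F).Nonempty := ⟨F fun _ => 0, Set.mem_range_self _⟩
  set m := sInf (Set.range F) with hm
  have hm_le : ∀ w, m ≤ F w := fun w => csInf_le hbddF ⟨w, rfl⟩
  have hm0 : 0 ≤ m := le_csInf hrne (by rintro y ⟨w, rfl⟩; exact hF0 w)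
  -- minimizing sequence
  have hseq : ∀ n : ℕ, ∃ w : Fin k → E, F w < m + 1 / (n + 1) := by
    intro n
    have hpos' : (0:ℝ) < 1 / (n + 1) := by positivity
    have hlt' : sInf (Set.range F) < m + 1 / (n + 1) := by rw [← hm]; linarith
    obtain ⟨y, ⟨w, rfl⟩, hlt⟩ := exists_lt_of_csInf_lt hrne hlt'
    exact ⟨w, hlt⟩
  choose u hu using hseq
  -- compactification map
  set c : E → E := fun y => (1 + ‖y‖)⁻¹ • y with hc
  have hpos : ∀ y : E, (0 : ℝ) < 1 + ‖y‖ := fun y => by positivity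
  have hcnorm : ∀ y : E, ‖c y‖ = ‖y‖ / (1 + ‖y‖) := by
    intro y
    rw [hc]
    simp only [norm_smul, Real.norm_eq_abs, abs_of_pos (inv_pos.2 (hpos y))]
    rw [inv_mul_eq_div]
  have hclt : ∀ y : E, ‖c y‖ < 1 := fun y => by
    rw [hcnorm y]; exact (div_lt_one (hpos y)).2 (by linarith [norm_nonneg y])
  have hcinv : ∀ y : E, (1 - ‖c y‖)⁻¹ • c y = y := by
    intro y
    have h1 : 1 - ‖c y‖ = (1 + ‖y‖)⁻¹ := by
      rw [hcnorm y, one_sub_div (hpos y).ne', add_sub_cancel_right, one_div]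
    rw [h1, inv_inv, hc, smul_smul, mul_inv_cancel₀ (hpos y).ne', one_smul]
  -- subsequence
  have hmem : ∀ n, (fun i => c (u n i)) ∈ Metric.closedBall (0 : Fin k → E) 1 := by
    intro n
    rw [Metric.mem_closedBall, dist_zero_right]
    exact (pi_norm_le_iff_of_nonneg zero_le_one).2 fun i => (hclt _).le
  obtain ⟨v, hv, φ, hφ, hconv⟩ :=
    (isCompact_closedBall (0 : Fin k → E) 1).tendsto_subseq hmem
  have hci : ∀ i, Tendsto (fun n => c (u (φ n) i)) atTop (𝓝 (v i)) := by
    intro i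
    exact (tendsto_pi_nhds.1 hconv) i
  have hv1 : ∀ i, ‖v i‖ ≤ 1 := by
    intro i
    have := Metric.mem_closedBall.1 hv
    rw [dist_zero_right] at this
    exact (norm_le_pi_norm v i).trans this
  -- convergent coordinates
  have hA : ∀ i, ‖v i‖ < 1 →
      Tendsto (fun n => u (φ n) i) atTop (𝓝 ((1 - ‖v i‖)⁻¹ • v i)) := by
    intro i hi
    have hcont : ContinuousAt (fun y : E => (1 - ‖y‖)⁻¹ • y) (v i) := by
      have h1 : (1 : ℝ) - ‖v i‖ ≠ 0 := by linarith
      exact ((continuousAt_const.sub continuous_norm.continuousAt).inv₀ h1).smul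
        continuousAt_id
    have := hcont.tendsto.comp (hci i)
    simpa only [Function.comp_def, hcinv] using this
  -- escaping coordinates
  have hB : ∀ i, ¬ ‖v i‖ < 1 → Tendsto (fun n => ‖u (φ n) i‖) atTop atTop := by
    intro i hi
    have hvi : ‖v i‖ = 1 := le_antisymm (hv1 i) (not_lt.1 hi)
    have heq : ∀ n, ‖u (φ n) i‖ = ‖c (u (φ n) i)‖ / (1 - ‖c (u (φ n) i)‖) := by
      intro n
      set y := u (φ n) i
      have h1 : 1 - ‖c y‖ = (1 + ‖y‖)⁻¹ := by rw [hcnorm y]; field_simp; ring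
      rw [h1, hcnorm y, div_inv_eq_mul, div_mul_cancel₀ _ (hpos y).ne']
    have ht : Tendsto (fun n => ‖c (u (φ n) i)‖) atTop (𝓝 1) := by
      have := (hci i).norm
      rwa [hvi] at this
    have hd : Tendsto (fun n => 1 - ‖c (u (φ n) i)‖) atTop (𝓝[>] (0:ℝ)) := by
      rw [tendsto_nhdsWithin_iff]
      refine ⟨by simpa using ht.const_sub 1, Eventually.of_forall fun n => sub_pos.2 (hclt _)⟩
    have hinv : Tendsto (fun n => (1 - ‖c (u (φ n) i)‖)⁻¹) atTop atTop :=
      tendsto_inv_nhdsGT_zero.comp hd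
    have hmain : Tendsto
        (fun n => ‖c (u (φ n) i)‖ * (1 - ‖c (u (φ n) i)‖)⁻¹) atTop atTop :=
      Tendsto.pos_mul_atTop one_pos ht hinv
    refine hmain.congr fun n => ?_
    rw [← div_eq_mul_inv, ← heq n]
  -- a ball with mass ≥ 1/2
  have hball : ∃ r : ℕ, (1/2 : ℝ≥0∞) ≤ μ (Metric.closedBall (0 : E) r) := by
    have hmono : Monotone fun r : ℕ => Metric.closedBall (0 : E) r := fun a b hab =>
      Metric.closedBall_subset_closedBall (by exact_mod_cast hab)
    have hU : (⋃ r : ℕ, Metric.closedBall (0 : E) r) = Set.univ := by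
      ext x
      simp only [Set.mem_iUnion, Set.mem_univ, iff_true, Metric.mem_closedBall,
        dist_zero_right]
      obtain ⟨r, hr⟩ := exists_nat_ge ‖x‖
      exact ⟨r, hr⟩
    have hT := tendsto_measure_iUnion_atTop (μ := μ) hmono
    rw [hU, (measure_univ : μ Set.univ = 1)] at hT
    obtain ⟨r, hr⟩ := (hT.eventually_const_lt (by norm_num : (1/2 : ℝ≥0∞) < 1)).exists
    exact ⟨r, hr.le⟩
  obtain ⟨r, hr⟩ := hball
  have hi0 : ∃ i, ‖v i‖ < 1 := by
    by_contra hcon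
    push_neg at hcon
    set C : ℝ := r + 2 * Real.sqrt (m + 1) + 1 with hC
    have hsq : Real.sqrt (m+1) ^ 2 = m + 1 := Real.sq_sqrt (by linarith)
    have hev : ∀ᶠ n in atTop, ∀ i, C ≤ ‖u (φ n) i‖ :=
      eventually_all.2 fun i => (hB i (not_lt.2 (hcon i))).eventually_ge_atTop C
    obtain ⟨n, hn⟩ := hev.exists
    set g : E → ℝ := fun x => (⨅ i, dist x (u (φ n) i)) ^ 2 with hg
    have hgi : Integrable g μ := g_integrable hk h2 (u (φ n))
    have hglb : ∀ x ∈ Metric.closedBall (0:E) (r:ℝ),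
        (2 * Real.sqrt (m+1) + 1)^2 ≤ g x := by
      intro x hx
      rw [Metric.mem_closedBall, dist_zero_right] at hx
      have hbd : ∀ i, 2 * Real.sqrt (m+1) + 1 ≤ dist x (u (φ n) i) := by
        intro i
        have h1 : ‖u (φ n) i‖ - ‖x‖ ≤ dist x (u (φ n) i) := by
          rw [dist_comm, dist_eq_norm]
          linarith [norm_sub_norm_le (u (φ n) i) x]
        have h2' := hn i
        rw [hC] at h2'
        linarith
      have hinf : 2 * Real.sqrt (m+1) + 1 ≤ ⨅ i, dist x (u (φ n) i) := le_ciInf hbd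
      have hnn : (0:ℝ) ≤ 2 * Real.sqrt (m+1) + 1 := by positivity
      exact pow_le_pow_left₀ hnn hinf 2
    have hmeas : MeasurableSet (Metric.closedBall (0:E) (r:ℝ)) :=
      Metric.isClosed_closedBall.measurableSet
    have hint1 : (2 * Real.sqrt (m+1) + 1)^2
          * (μ (Metric.closedBall (0:E) (r:ℝ))).toReal
        ≤ ∫ x in Metric.closedBall (0:E) (r:ℝ), g x ∂μ :=
      by have := setIntegral_ge_of_const_le_real hmeas (measure_ne_top μ _) hglb hgi.integrableOn
         rwa [measureReal_def] at this
    have hint2 : ∫ x in Metric.closedBall (0:E) (r:ℝ), g x ∂μ ≤ ∫ x, g x ∂μ :=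
      setIntegral_le_integral hgi (ae_of_all _ fun x => by positivity)
    have htr : (1/2 : ℝ) ≤ (μ (Metric.closedBall (0:E) (r:ℝ))).toReal := by
      have h' := ENNReal.toReal_mono (measure_ne_top μ _) hr
      simpa using h'
    have hFn : (∫ x, g x ∂μ) < m + 1 := by
      have h1 := hu (φ n)
      have h2' : (1:ℝ) / (φ n + 1) ≤ 1 := by
        rw [div_le_one (by positivity)]
        linarith [(Nat.cast_nonneg (φ n) : (0:ℝ) ≤ φ n)]
      calc (∫ x, g x ∂μ) = F (u (φ n)) := rfl
        _ < m + 1 / (φ n + 1) := h1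
        _ ≤ m + 1 := by linarith
    have hnn : (0:ℝ) ≤ 2 * Real.sqrt (m+1) + 1 := by positivity
    nlinarith [Real.sqrt_nonneg (m+1),
      mul_le_mul_of_nonneg_left htr (by positivity : (0:ℝ) ≤ (2 * Real.sqrt (m+1) + 1)^2)]
  obtain ⟨i₀, hi₀⟩ := hi0
  set z : Fin k → E := fun i =>
    if _ : ‖v i‖ < 1 then (1 - ‖v i‖)⁻¹ • v i else (1 - ‖v i₀‖)⁻¹ • v i₀ with hz
  have hzi : ∀ i, ‖v i‖ < 1 → z i = (1 - ‖v i‖)⁻¹ • v i := fun i hi => by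
    simp only [hz, dif_pos hi]
  have hzi' : ∀ i, ¬ ‖v i‖ < 1 → z i = z i₀ := fun i hi => by
    simp only [hz, dif_neg hi, dif_pos hi₀]
  have hzconv : ∀ i, ‖v i‖ < 1 → Tendsto (fun n => u (φ n) i) atTop (𝓝 (z i)) := by
    intro i hi
    rw [hzi i hi]
    exact hA i hi
  have hpt : ∀ x : E, Tendsto (fun n => (⨅ i, dist x (u (φ n) i)) ^ 2) atTop
      (𝓝 ((⨅ i, dist x (z i)) ^ 2)) := by
    intro x
    have hmin : ∃ j, (‖v j‖ < 1) ∧ ∀ i, dist x (z j) ≤ dist x (z i) := by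
      obtain ⟨j', hj'⟩ := Finite.exists_min fun i => dist x (z i)
      by_cases hj : ‖v j'‖ < 1
      · exact ⟨j', hj, hj'⟩
      · refine ⟨i₀, hi₀, fun i => ?_⟩
        have hzz : z j' = z i₀ := hzi' j' hj
        calc dist x (z i₀) = dist x (z j') := by rw [hzz]
          _ ≤ dist x (z i) := hj' i
    obtain ⟨j, hjlt, hjmin⟩ := hmin
    have ha : (⨅ i, dist x (z i)) = dist x (z j) :=
      le_antisymm (ciInf_le (bddBelow_dist z x) j) (le_ciInf hjmin)
    rw [ha]
    refine Tendsto.pow ?_ 2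
    rw [tendsto_order]
    constructor
    · intro b hb
      set ε := (dist x (z j) - b) / 2 with hε
      have hεpos : 0 < ε := by rw [hε]; linarith
      have hev : ∀ᶠ n in atTop, ∀ i, b + ε ≤ dist x (u (φ n) i) := by
        refine eventually_all.2 fun i => ?_
        by_cases hi : ‖v i‖ < 1
        · have hlim : Tendsto (fun n => dist x (u (φ n) i)) atTop
              (𝓝 (dist x (z i))) := tendsto_const_nhds.dist (hzconv i hi)
          have hlt : b + ε < dist x (z i) := by
            have := hjmin i
            rw [hε]; linarith
          exact (hlim.eventually_const_lt hlt).mono fun n h => h.le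
        · have hev' := (hB i hi).eventually_ge_atTop (b + ε + ‖x‖)
          refine hev'.mono fun n h => ?_
          have h1 : ‖u (φ n) i‖ - ‖x‖ ≤ dist x (u (φ n) i) := by
            rw [dist_comm, dist_eq_norm]
            linarith [norm_sub_norm_le (u (φ n) i) x]
          linarith
      refine hev.mono fun n h => ?_
      have hle : b + ε ≤ ⨅ i, dist x (u (φ n) i) := le_ciInf h
      linarith
    · intro b hb
      have hlim : Tendsto (fun n => dist x (u (φ n) j)) atTop
          (𝓝 (dist x (z j))) := tendsto_const_nhds.dist (hzconv j hjlt)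
      refine (hlim.eventually_lt_const hb).mono fun n h => ?_
      exact lt_of_le_of_lt (ciInf_le (bddBelow_dist _ x) j) h
  have hbound : ∀ᶠ n in atTop, ∀ᵐ x ∂μ,
      ‖(⨅ i, dist x (u (φ n) i)) ^ 2‖ ≤ (‖x‖ + (‖z i₀‖ + 1)) ^ 2 := by
    have hev : ∀ᶠ n in atTop, ‖u (φ n) i₀‖ ≤ ‖z i₀‖ + 1 :=
      ((hzconv i₀ hi₀).norm).eventually_le_const (lt_add_one ‖z i₀‖)
    refine hev.mono fun n hn => ae_of_all _ fun x => ?_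
    rw [Real.norm_eq_abs, abs_of_nonneg (by positivity)]
    have h1 : ⨅ i, dist x (u (φ n) i) ≤ dist x (u (φ n) i₀) :=
      ciInf_le (bddBelow_dist _ x) i₀
    have h2' : dist x (u (φ n) i₀) ≤ ‖x‖ + ‖u (φ n) i₀‖ := dist_le_norm_add_norm _ _
    have h0 : 0 ≤ ⨅ i, dist x (u (φ n) i) := iInf_dist_nonneg _ x
    nlinarith [norm_nonneg x, norm_nonneg (u (φ n) i₀), norm_nonneg (z i₀)]
  have hT : Tendsto (fun n => F (u (φ n))) atTop (𝓝 (F z)) :=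
    tendsto_integral_filter_of_dominated_convergence _
      (Eventually.of_forall fun n =>
        ((cont_iInf_dist hk (u (φ n))).pow 2).aestronglyMeasurable)
      hbound (integrable_bound h2 _) (ae_of_all _ hpt)
  have hFzm : F z ≤ m := by
    have hg : Tendsto (fun n : ℕ => m + 1 / (n + 1 : ℝ)) atTop (𝓝 m) := by
      have h0 := tendsto_one_div_add_atTop_nhds_zero_nat (𝕜 := ℝ)
      simpa using tendsto_const_nhds.add h0
    refine le_of_tendsto_of_tendsto' hT hg fun n => ?_
    have h1 := (hu (φ n)).le
    have h2' : (1:ℝ) / (φ n + 1) ≤ 1 / (n + 1) := by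
      apply one_div_le_one_div_of_le (by positivity)
      have hn : (n:ℝ) ≤ φ n := by exact_mod_cast hφ.le_apply
      linarith
    calc F (u (φ n)) ≤ m + 1 / (φ n + 1) := h1
      _ ≤ m + 1 / (n + 1) := by linarith
  exact ⟨z, fun w => le_trans hFzm (hm_le w)⟩
end

section
/- Let μ be a Borel probability measure on ℝ^N with finite second moment whose support has at least k points, and let (z_1,...,z_k) be a minimizer of the k-means functional F_{μ,k}. If V_i = {x ∈ ℝ^N : |x - z_i| = min_j |x - z_j|} are the closed Voronoi cells, then μ(V_i ∩ V_j) = 0 for all i ≠ j. -/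
open MeasureTheory

section KMeansAux

variable {k : ℕ} [NeZero k] {E : Type*} [NormedAddCommGroup E] [InnerProductSpace ℝ E]
  [CompleteSpace E] [MeasurableSpace E] [BorelSpace E]
  [SecondCountableTopology E]

lemma mindist_eq_inf' (z : Fin k → E) (x : E) :
    (⨅ i, dist x (z i)) = Finset.univ.inf' Finset.univ_nonempty (fun i => dist x (z i)) :=
  (Finset.inf'_univ_eq_ciInf _).symm

lemma mindist_cont (z : Fin k → E) : Continuous fun x => ⨅ i, dist x (z i) := by
  simp only [mindist_eq_inf']
  exact Continuous.finset_inf'_apply (f := fun i x => dist x (z i)) Finset.univ_nonempty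
    fun i _ => (continuous_id.dist continuous_const)

lemma mindist_nonneg (z : Fin k → E) (x : E) : 0 ≤ ⨅ i, dist x (z i) :=
  Real.iInf_nonneg fun i => dist_nonneg

lemma mindist_le (z : Fin k → E) (x : E) (i : Fin k) : (⨅ l, dist x (z l)) ≤ dist x (z i) :=
  ciInf_le (Set.finite_range _).bddBelow i

lemma mindist_exists (z : Fin k → E) (x : E) : ∃ i, (⨅ l, dist x (z l)) = dist x (z i) := by
  obtain ⟨i, -, hi⟩ := Finset.exists_mem_eq_inf' (Finset.univ_nonempty) (fun i => dist x (z i))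
  exact ⟨i, by rw [mindist_eq_inf', hi]⟩

lemma le_mindist (z : Fin k → E) (x : E) {c : ℝ} (h : ∀ i, c ≤ dist x (z i)) :
    c ≤ ⨅ i, dist x (z i) := le_ciInf h

variable (μ : Measure E) [IsProbabilityMeasure μ]

lemma integrable_fw (h2 : Integrable (fun x => ‖x‖ ^ 2) μ) (w : Fin k → E) :
    Integrable (fun x => (⨅ i, dist x (w i)) ^ 2) μ := by
  have i0 : Fin k := Classical.arbitrary _
  have hg : Integrable (fun x => 2 * ‖x‖ ^ 2 + 2 * ‖w i0‖ ^ 2) μ :=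
    (h2.const_mul 2).add (integrable_const _)
  refine hg.mono' (((mindist_cont w).pow 2).aestronglyMeasurable) ?_
  filter_upwards with x
  have h1 : 0 ≤ ⨅ i, dist x (w i) := mindist_nonneg w x
  have h3 : (⨅ i, dist x (w i)) ≤ dist x (w i0) := mindist_le w x i0
  have h4 : dist x (w i0) ≤ ‖x‖ + ‖w i0‖ := by
    rw [dist_eq_norm]; exact (norm_sub_le _ _)
  rw [Real.norm_eq_abs, abs_of_nonneg (by positivity)]
  nlinarith [norm_nonneg x, norm_nonneg (w i0), dist_nonneg (x := x) (y := w i0), sq_nonneg (‖x‖ - ‖w i0‖)]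

omit [NeZero k] in
lemma integrable_id' (h2 : Integrable (fun x => ‖x‖ ^ 2) μ) :
    Integrable (fun x : E => x) μ := by
  have hg : Integrable (fun x : E => 1 + ‖x‖ ^ 2) μ := (integrable_const _).add h2
  refine hg.mono' (measurable_id.aestronglyMeasurable) ?_
  filter_upwards with x
  nlinarith [norm_nonneg x, sq_nonneg (‖x‖ - 1)]

omit [NeZero k] in
lemma integrable_distsq (h2 : Integrable (fun x => ‖x‖ ^ 2) μ) (p : E) :
    Integrable (fun x => ‖x - p‖ ^ 2) μ := by
  have hg : Integrable (fun x : E => 2 * ‖x‖ ^ 2 + 2 * ‖p‖ ^ 2) μ :=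
    (h2.const_mul 2).add (integrable_const _)
  refine hg.mono' (((continuous_id.sub continuous_const).norm.pow 2).aestronglyMeasurable) ?_
  filter_upwards with x
  have h4 : ‖x - p‖ ≤ ‖x‖ + ‖p‖ := norm_sub_le _ _
  rw [Real.norm_eq_abs, abs_of_nonneg (by positivity)]
  nlinarith [norm_nonneg x, norm_nonneg p, norm_nonneg (x - p), sq_nonneg (‖x‖ - ‖p‖)]

omit [NeZero k] in
/-- The centroid identity: for `c` the centroid of `S`,
`∫_S ‖x-p‖² = ∫_S ‖x-c‖² + μ(S) ‖c-p‖²`. -/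
lemma centroid_identity (h2 : Integrable (fun x => ‖x‖ ^ 2) μ) {S : Set E}
    (hS : MeasurableSet S) (hμS : μ S ≠ 0) (p : E) :
    ∫ x in S, ‖x - p‖ ^ 2 ∂μ
      = (∫ x in S, ‖x - ((μ S).toReal⁻¹ • ∫ x in S, x ∂μ : E)‖ ^ 2 ∂μ)
        + (μ S).toReal * ‖((μ S).toReal⁻¹ • ∫ x in S, x ∂μ : E) - p‖ ^ 2 := by
  set c : E := ((μ S).toReal⁻¹ • ∫ x in S, x ∂μ : E) with hc
  have hμfin : μ S ≠ ⊤ := measure_ne_top μ S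
  have htR : (μ S).toReal ≠ 0 := by
    simp [ENNReal.toReal_eq_zero_iff, hμS, hμfin]
  have hxint : Integrable (fun x : E => x) (μ.restrict S) :=
    (integrable_id' μ h2).restrict
  have hmean : ∫ x in S, (x - c) ∂μ = 0 := by
    rw [integral_sub hxint (integrable_const c), setIntegral_const]
    rw [hc, smul_smul, measureReal_def, mul_inv_cancel₀ htR, one_smul, sub_self]
  have hsubint : Integrable (fun x : E => x - c) (μ.restrict S) := hxint.sub (integrable_const c)
  have hinner : ∫ x in S, (inner ℝ (c - p) (x - c) : ℝ) ∂μ = 0 := by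
    rw [integral_inner hsubint (c - p), hmean, inner_zero_right]
  have hexp : ∀ x : E, ‖x - p‖ ^ 2
      = ‖x - c‖ ^ 2 + 2 * (inner ℝ (c - p) (x - c) : ℝ) + ‖c - p‖ ^ 2 := by
    intro x
    have := norm_add_sq_real (x - c) (c - p)
    have h1 : (x - c) + (c - p) = x - p := by abel
    rw [h1] at this
    rw [this, real_inner_comm]
  have hint1 : Integrable (fun x => ‖x - c‖ ^ 2) (μ.restrict S) :=
    (integrable_distsq μ h2 c).restrict
  have hint2 : Integrable (fun x : E => 2 * (inner ℝ (c - p) (x - c) : ℝ)) (μ.restrict S) :=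
    ((hsubint.const_inner (c - p)).const_mul 2)
  have hint12 : Integrable (fun x : E => ‖x - c‖ ^ 2 + 2 * (inner ℝ (c - p) (x - c) : ℝ))
      (μ.restrict S) := hint1.add hint2
  calc ∫ x in S, ‖x - p‖ ^ 2 ∂μ
      = ∫ x in S, (‖x - c‖ ^ 2 + 2 * (inner ℝ (c - p) (x - c) : ℝ) + ‖c - p‖ ^ 2) ∂μ := by
        exact integral_congr_ae (Filter.EventuallyEq.of_eq (funext hexp))
    _ = (∫ x in S, ‖x - c‖ ^ 2 ∂μ) + (∫ x in S, 2 * (inner ℝ (c - p) (x - c) : ℝ) ∂μ)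
        + ∫ x in S, ‖c - p‖ ^ 2 ∂μ := by
        rw [integral_add hint12 (integrable_const _), integral_add hint1 hint2]
    _ = (∫ x in S, ‖x - c‖ ^ 2 ∂μ) + (μ S).toReal * ‖c - p‖ ^ 2 := by
        rw [integral_const_mul, hinner, setIntegral_const]
        simp [smul_eq_mul, measureReal_def]

end KMeansAux
section KMeansAux2

variable {k : ℕ} [NeZero k] {E : Type*} [NormedAddCommGroup E] [InnerProductSpace ℝ E]
  [CompleteSpace E] [MeasurableSpace E] [BorelSpace E]
  [SecondCountableTopology E]

/-- Closed Voronoi cell. -/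
def vcell (z : Fin k → E) (l : Fin k) : Set E := {x | dist x (z l) = ⨅ m, dist x (z m)}

/-- A measurable partition subordinate to the Voronoi diagram. -/
def pcell (z : Fin k → E) (l : Fin k) : Set E :=
  vcell z l \ ⋃ (m : Fin k) (_ : m < l), vcell z m

lemma vcell_meas (z : Fin k → E) (l : Fin k) : MeasurableSet (vcell z l) :=
  (isClosed_eq (continuous_id.dist continuous_const) (mindist_cont z)).measurableSet

lemma pcell_meas (z : Fin k → E) (l : Fin k) : MeasurableSet (pcell z l) :=
  (vcell_meas z l).diff (MeasurableSet.iUnion fun m =>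
    MeasurableSet.iUnion fun _ => vcell_meas z m)

lemma pcell_subset (z : Fin k → E) (l : Fin k) : pcell z l ⊆ vcell z l :=
  Set.diff_subset

lemma pcell_disjoint (z : Fin k → E) : Pairwise (Function.onFun Disjoint (pcell z)) := by
  intro m l hml
  rcases lt_or_gt_of_ne hml with h | h
  · refine Set.disjoint_left.2 fun x hxm hxl => ?_
    exact hxl.2 (Set.mem_iUnion.2 ⟨m, Set.mem_iUnion.2 ⟨h, hxm.1⟩⟩)
  · refine Set.disjoint_left.2 fun x hxm hxl => ?_
    exact hxm.2 (Set.mem_iUnion.2 ⟨l, Set.mem_iUnion.2 ⟨h, hxl.1⟩⟩)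

lemma pcell_cover (z : Fin k → E) : (⋃ l, pcell z l) = Set.univ := by
  classical
  refine Set.eq_univ_of_forall fun x => ?_
  have hne : (Finset.univ.filter fun l => x ∈ vcell z l).Nonempty := by
    obtain ⟨i, hi⟩ := mindist_exists z x
    exact ⟨i, by simp only [Finset.mem_filter, Finset.mem_univ, true_and]; exact hi.symm⟩
  set s := Finset.univ.filter fun l => x ∈ vcell z l
  refine Set.mem_iUnion.2 ⟨s.min' hne, ?_, ?_⟩
  · have := s.min'_mem hne
    simpa [s] using this
  · intro hmem
    obtain ⟨m, hm⟩ := Set.mem_iUnion.1 hmem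
    obtain ⟨hml, hxm⟩ := Set.mem_iUnion.1 hm
    have : s.min' hne ≤ m := Finset.min'_le s m (by simp [s, hxm])
    exact absurd hml (not_lt.2 this)

variable (μ : Measure E) [IsProbabilityMeasure μ]

/-- Decomposition of the k-means cost over a Voronoi-subordinate partition. -/
lemma cost_decomp (h2 : Integrable (fun x => ‖x‖ ^ 2) μ) (z w : Fin k → E)
    (C : Fin k → Set E) (hmeas : ∀ l, MeasurableSet (C l))
    (hdisj : Pairwise (Function.onFun Disjoint C)) (hcover : (⋃ l, C l) = Set.univ) :
    ∫ x, (⨅ i, dist x (w i)) ^ 2 ∂μ = ∑ m : Fin k, ∫ x in C m, (⨅ i, dist x (w i)) ^ 2 ∂μ := by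
  rw [← setIntegral_univ, ← hcover]
  exact integral_iUnion_fintype hmeas hdisj fun m => (integrable_fw μ h2 w).integrableOn

/-- The centroid condition: at a minimizer, each point is the centroid of its cell in any
Voronoi-subordinate measurable partition with positive mass. -/
lemma centroid_cond (h2 : Integrable (fun x => ‖x‖ ^ 2) μ) (z : Fin k → E)
    (hmin : ∀ w : Fin k → E,
      ∫ x, (⨅ i, dist x (z i)) ^ 2 ∂μ ≤ ∫ x, (⨅ i, dist x (w i)) ^ 2 ∂μ)
    (C : Fin k → Set E) (hmeas : ∀ l, MeasurableSet (C l))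
    (hdisj : Pairwise (Function.onFun Disjoint C)) (hcover : (⋃ l, C l) = Set.univ)
    (hsub : ∀ l, ∀ x ∈ C l, dist x (z l) = ⨅ m, dist x (z m))
    (l : Fin k) (hpos : μ (C l) ≠ 0) :
    (μ (C l)).toReal • z l = ∫ x in C l, x ∂μ := by
  set c : E := ((μ (C l)).toReal⁻¹ • ∫ x in C l, x ∂μ : E) with hc
  have htR : (μ (C l)).toReal ≠ 0 := by
    simp [ENNReal.toReal_eq_zero_iff, hpos, measure_ne_top μ _]
  set w : Fin k → E := Function.update z l c with hw
  -- cost of z decomposes exactly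
  have key1 : ∫ x, (⨅ i, dist x (z i)) ^ 2 ∂μ
      = ∑ m : Fin k, ∫ x in C m, dist x (z m) ^ 2 ∂μ := by
    rw [cost_decomp μ h2 z z C hmeas hdisj hcover]
    refine Finset.sum_congr rfl fun m _ => ?_
    exact setIntegral_congr_fun (hmeas m) fun x hx => by rw [hsub m x hx]
  have key2 : ∫ x, (⨅ i, dist x (w i)) ^ 2 ∂μ
      ≤ ∑ m : Fin k, ∫ x in C m, dist x (w m) ^ 2 ∂μ := by
    rw [cost_decomp μ h2 z w C hmeas hdisj hcover]
    refine Finset.sum_le_sum fun m _ => ?_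
    refine setIntegral_mono_on (integrable_fw μ h2 w).integrableOn ?_ (hmeas m)
      fun x hx => ?_
    · have : Integrable (fun x => ‖x - w m‖ ^ 2) μ := integrable_distsq μ h2 (w m)
      simpa [dist_eq_norm] using this.integrableOn
    · have h1 := mindist_le w x m
      have h0 := mindist_nonneg w x
      nlinarith
  have hsum : ∑ m : Fin k, ∫ x in C m, dist x (z m) ^ 2 ∂μ
      ≤ ∑ m : Fin k, ∫ x in C m, dist x (w m) ^ 2 ∂μ := key1 ▸ (hmin w).trans key2
  have hterm : ∫ x in C l, dist x (z l) ^ 2 ∂μ ≤ ∫ x in C l, dist x c ^ 2 ∂μ := by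
    have herase : ∑ m ∈ Finset.univ.erase l, ∫ x in C m, dist x (z m) ^ 2 ∂μ
        = ∑ m ∈ Finset.univ.erase l, ∫ x in C m, dist x (w m) ^ 2 ∂μ := by
      refine Finset.sum_congr rfl fun m hm => ?_
      rw [hw, Function.update_of_ne (Finset.ne_of_mem_erase hm)]
    have e1 : (∑ m ∈ Finset.univ.erase l, ∫ x in C m, dist x (z m) ^ 2 ∂μ)
        + ∫ x in C l, dist x (z l) ^ 2 ∂μ
        = ∑ m : Fin k, ∫ x in C m, dist x (z m) ^ 2 ∂μ :=
      Finset.sum_erase_add Finset.univ _ (Finset.mem_univ l)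
    have e2 : (∑ m ∈ Finset.univ.erase l, ∫ x in C m, dist x (w m) ^ 2 ∂μ)
        + ∫ x in C l, dist x (w l) ^ 2 ∂μ
        = ∑ m : Fin k, ∫ x in C m, dist x (w m) ^ 2 ∂μ :=
      Finset.sum_erase_add Finset.univ _ (Finset.mem_univ l)
    have hwl : w l = c := Function.update_self l c z
    rw [hwl] at e2
    linarith [hsum, herase, e1, e2]
  -- centroid identity
  have hid := centroid_identity μ h2 (hmeas l) hpos (z l)
  rw [← hc] at hid
  have hnn : 0 < (μ (C l)).toReal := lt_of_le_of_ne ENNReal.toReal_nonneg (Ne.symm htR)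
  have hdist : ∀ p : E, ∀ x : E, dist x p ^ 2 = ‖x - p‖ ^ 2 := fun p x => by
    rw [dist_eq_norm]
  simp_rw [hdist] at hterm
  have : (μ (C l)).toReal * ‖c - z l‖ ^ 2 ≤ 0 := by linarith [hid, hterm]
  have hcz : c = z l := by
    have h0 : ‖c - z l‖ ^ 2 ≤ 0 := by
      by_contra h
      push_neg at h
      nlinarith
    have : ‖c - z l‖ = 0 := by nlinarith [norm_nonneg (c - z l), sq_nonneg ‖c - z l‖]
    rwa [norm_sub_eq_zero_iff] at this
  rw [← hcz, hc, smul_smul, mul_inv_cancel₀ htR, one_smul]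

end KMeansAux2
section KMeansAux3

variable {k : ℕ} [NeZero k] {E : Type*} [NormedAddCommGroup E] [InnerProductSpace ℝ E]
  [CompleteSpace E] [MeasurableSpace E] [BorelSpace E]
  [SecondCountableTopology E]

variable (μ : Measure E) [IsProbabilityMeasure μ]

/-- If two centers coincide and the support contains a point outside the centers, the
configuration is not optimal. -/
lemma minimizer_injective (h2 : Integrable (fun x => ‖x‖ ^ 2) μ) (z : Fin k → E)
    (hmin : ∀ w : Fin k → E,
      ∫ x, (⨅ i, dist x (z i)) ^ 2 ∂μ ≤ ∫ x, (⨅ i, dist x (w i)) ^ 2 ∂μ)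
    (hex : ∃ a : E, a ∉ Set.range z ∧ ∀ ε > 0, 0 < μ (Metric.ball a ε))
    {i j : Fin k} (hij : i ≠ j) (hzij : z i = z j) : False := by
  obtain ⟨a, haz, hball⟩ := hex
  set d : ℝ := ⨅ l, dist a (z l) with hd
  have hdpos : 0 < d := by
    obtain ⟨l, hl⟩ := mindist_exists z a
    rw [hd, hl]
    rw [dist_pos]
    exact fun h => haz ⟨l, h.symm⟩
  set w : Fin k → E := Function.update z j a with hw
  -- pointwise the new min is no bigger
  have hpt : ∀ x, (⨅ l, dist x (w l)) ≤ ⨅ l, dist x (z l) := by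
    intro x
    refine le_mindist z x fun l => ?_
    by_cases hl : l = j
    · calc (⨅ m, dist x (w m)) ≤ dist x (w i) := mindist_le w x i
        _ = dist x (z l) := by rw [hl, hw, Function.update_of_ne hij, hzij]
    · calc (⨅ m, dist x (w m)) ≤ dist x (w l) := mindist_le w x l
        _ = dist x (z l) := by rw [hw, Function.update_of_ne hl]
  -- on the small ball the improvement is definite
  set B : Set E := Metric.ball a (d / 3) with hB
  have hBmeas : MeasurableSet B := Metric.isOpen_ball.measurableSet
  have hBpos : 0 < μ B := hball _ (by linarith)
  have himp : ∀ x ∈ B, (⨅ l, dist x (z l)) ^ 2 - (⨅ l, dist x (w l)) ^ 2 ≥ d ^ 2 / 3 := by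
    intro x hx
    have hxa : dist x a < d / 3 := Metric.mem_ball.1 hx
    have hup : (⨅ l, dist x (w l)) ≤ d / 3 := by
      calc (⨅ l, dist x (w l)) ≤ dist x (w j) := mindist_le w x j
        _ = dist x a := by rw [hw, Function.update_self]
        _ ≤ d / 3 := hxa.le
    have hlow : 2 * d / 3 ≤ ⨅ l, dist x (z l) := by
      refine le_mindist z x fun l => ?_
      have h1 : d ≤ dist a (z l) := mindist_le z a l
      have h2 := dist_triangle a x (z l)
      have h3 : dist a x < d / 3 := by rwa [dist_comm]
      linarith
    have h0 := mindist_nonneg w x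
    nlinarith
  -- integrate the improvement
  set f : E → ℝ := fun x => (⨅ l, dist x (z l)) ^ 2 - (⨅ l, dist x (w l)) ^ 2 with hf
  have hfint : Integrable f μ := (integrable_fw μ h2 z).sub (integrable_fw μ h2 w)
  have hfnn : 0 ≤ᵐ[μ] f := by
    filter_upwards with x
    have h1 := hpt x
    have h0 := mindist_nonneg w x
    simp only [hf, Pi.zero_apply]
    nlinarith
  have hineq1 : ∫ x in B, f x ∂μ ≤ ∫ x, f x ∂μ := setIntegral_le_integral hfint hfnn
  have hineq2 : d ^ 2 / 3 * (μ B).toReal ≤ ∫ x in B, f x ∂μ := by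
    have h := setIntegral_ge_of_const_le hBmeas (measure_ne_top μ B) himp hfint.integrableOn
    rw [measureReal_def, smul_eq_mul] at h
    linarith
  have hint : ∫ x, f x ∂μ
      = (∫ x, (⨅ l, dist x (z l)) ^ 2 ∂μ) - ∫ x, (⨅ l, dist x (w l)) ^ 2 ∂μ :=
    integral_sub (integrable_fw μ h2 z) (integrable_fw μ h2 w)
  have hBtR : 0 < (μ B).toReal :=
    ENNReal.toReal_pos hBpos.ne' (measure_ne_top μ B)
  have := hmin w
  nlinarith [hineq1, hineq2, hint, mul_pos (by positivity : (0:ℝ) < d ^ 2 / 3) hBtR]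

/-- Splitting lemma: if `v` is the (normalized) barycenter of both `T` and (essentially)
`T \ S`, then it is the barycenter of `S ⊆ T`. -/
lemma centroid_split (h2 : Integrable (fun x => ‖x‖ ^ 2) μ) {S T : Set E} (v : E)
    (hS : MeasurableSet S) (hTm : MeasurableSet T) (hST : S ⊆ T)
    (hT : (μ T).toReal • v = ∫ x in T, x ∂μ)
    (hTS : (μ (T \ S)).toReal • v = ∫ x in T \ S, x ∂μ) :
    (μ S).toReal • v = ∫ x in S, x ∂μ := by
  have hxint : Integrable (fun x : E => x) μ := integrable_id' μ h2
  have hsplit : ∫ x in T, x ∂μ = (∫ x in S, x ∂μ) + ∫ x in T \ S, x ∂μ := by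
    have h := setIntegral_union (f := fun x : E => x) Set.disjoint_sdiff_right (hTm.diff hS)
      hxint.integrableOn hxint.integrableOn
    rwa [Set.union_diff_cancel hST] at h
  have hμsplit : (μ T).toReal = (μ S).toReal + (μ (T \ S)).toReal := by
    have h : μ (S ∪ (T \ S)) = μ S + μ (T \ S) :=
      measure_union Set.disjoint_sdiff_right (hTm.diff hS)
    rw [Set.union_diff_cancel hST] at h
    rw [h, ENNReal.toReal_add (measure_ne_top μ _) (measure_ne_top μ _)]
  have : (μ S).toReal • v = (μ T).toReal • v - (μ (T \ S)).toReal • v := by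
    rw [hμsplit, add_smul]; abel
  rw [this, hT, hTS, hsplit]; abel

end KMeansAux3

/-- The support of a Borel measure: points all of whose neighborhoods have positive measure. -/
def measSupport {N : ℕ} (μ : Measure (EuclideanSpace ℝ (Fin N))) :
    Set (EuclideanSpace ℝ (Fin N)) :=
  {x | ∀ ε > 0, 0 < μ (Metric.ball x ε)}

/-- If the support of `μ` has at least `k` points and `z` minimizes the k-means functional
`F_{μ,k}`, then the boundaries between (closed) Voronoi cells `V_i` are `μ`-null:
`μ(V_i ∩ V_j) = 0` for `i ≠ j`. -/
theorem kmeans_voronoi_boundaries_null (N k : ℕ) (hk : 0 < k)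
    (μ : Measure (EuclideanSpace ℝ (Fin N))) [IsProbabilityMeasure μ]
    (h2 : Integrable (fun x => ‖x‖ ^ 2) μ)
    (hsupp : (k : ℕ∞) ≤ (measSupport μ).encard)
    (z : Fin k → EuclideanSpace ℝ (Fin N))
    (hmin : ∀ w : Fin k → EuclideanSpace ℝ (Fin N),
      ∫ x, (⨅ i, dist x (z i)) ^ 2 ∂μ ≤ ∫ x, (⨅ i, dist x (w i)) ^ 2 ∂μ) :
    ∀ i j : Fin k, i ≠ j →
      μ ({x | dist x (z i) = ⨅ l, dist x (z l)}
          ∩ {x | dist x (z j) = ⨅ l, dist x (z l)}) = 0 := by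
  classical
  haveI : NeZero k := ⟨hk.ne'⟩
  -- the minimizing centers are pairwise distinct
  have hinj : Function.Injective z := by
    intro i' j' hzij
    by_contra hij'
    refine minimizer_injective μ h2 z hmin ?_ hij' hzij
    have hr : Set.range z = z '' (Set.univ \ {j'}) := by
      apply Set.Subset.antisymm
      · rintro _ ⟨l, rfl⟩
        by_cases hl : l = j'
        · exact ⟨i', ⟨Set.mem_univ _, hij'⟩, by rw [hzij, hl]⟩
        · exact ⟨l, ⟨Set.mem_univ _, hl⟩, rfl⟩
      · rintro _ ⟨l, -, rfl⟩
        exact ⟨l, rfl⟩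
    have hlt : (Set.range z).encard < (k : ℕ∞) := by
      calc (Set.range z).encard ≤ (Set.univ \ {j'} : Set (Fin k)).encard := by
            rw [hr]; exact Set.encard_image_le _ _
        _ < (Set.univ : Set (Fin k)).encard :=
            Set.Finite.encard_lt_encard (Set.toFinite _)
              (Set.sdiff_singleton_ssubset.2 (Set.mem_univ j'))
        _ = (k : ℕ∞) := by
            rw [Set.encard_univ]; simp
    have hnsub : ¬ measSupport μ ⊆ Set.range z := fun hsub =>
      absurd ((hsupp.trans (Set.encard_mono hsub)).trans_lt hlt) (lt_irrefl _)
    obtain ⟨a, haS, haz⟩ := Set.not_subset.1 hnsub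
    exact ⟨a, haz, haS⟩
  intro i j hij
  by_contra hA
  set A : Set (EuclideanSpace ℝ (Fin N)) :=
    {x | dist x (z i) = ⨅ l, dist x (z l)} ∩ {x | dist x (z j) = ⨅ l, dist x (z l)} with hAdef
  have hAmeas : MeasurableSet A := (vcell_meas z i).inter (vcell_meas z j)
  set C : Fin k → Set (EuclideanSpace ℝ (Fin N)) := pcell z with hCdef
  have hCmeas : ∀ l, MeasurableSet (C l) := pcell_meas z
  have hCdisj : Pairwise (Function.onFun Disjoint C) := pcell_disjoint z
  have hCcover : (⋃ l, C l) = Set.univ := pcell_cover z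
  have hCsub : ∀ l, ∀ x ∈ C l, dist x (z l) = ⨅ m, dist x (z m) := fun l x hx =>
    (pcell_subset z l hx : x ∈ vcell z l)
  -- find a piece of the boundary with positive mass
  have hexm : ∃ m, μ (A ∩ C m) ≠ 0 := by
    by_contra hall
    push_neg at hall
    apply hA
    have hAeq : A = ⋃ m, A ∩ C m := by
      rw [← Set.inter_iUnion, hCcover, Set.inter_univ]
    rw [hAeq]
    exact measure_iUnion_null hall
  obtain ⟨m, hSm0⟩ := hexm
  set S : Set (EuclideanSpace ℝ (Fin N)) := A ∩ C m with hSdef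
  have hSmeas : MeasurableSet S := hAmeas.inter (hCmeas m)
  have hSC : S ⊆ C m := Set.inter_subset_right
  set n : Fin k := if m = i then j else i with hn
  have hnm : n ≠ m := by
    rcases eq_or_ne m i with h | h
    · rw [hn, if_pos h, h]; exact hij.symm
    · rw [hn, if_neg h]; exact fun hh => h hh.symm
  have hSVn : ∀ x ∈ S, dist x (z n) = ⨅ l, dist x (z l) := by
    intro x hx
    rcases eq_or_ne m i with h | h
    · rw [hn, if_pos h]; exact hx.1.2
    · rw [hn, if_neg h]; exact hx.1.1
  have hCnS : Disjoint (C n) S := Set.disjoint_left.2 fun x hx hxS =>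
    Set.disjoint_left.1 (hCdisj hnm) hx (hSC hxS)
  -- modified partition: move S from cell m to cell n
  set C' : Fin k → Set (EuclideanSpace ℝ (Fin N)) :=
    fun l => if l = m then C m \ S else if l = n then C n ∪ S else C l with hC'
  have D2 : C' m = C m \ S := by rw [hC']; simp
  have D3 : C' n = C n ∪ S := by rw [hC']; simp [hnm]
  have D1 : ∀ l, l ≠ m → l ≠ n → C' l = C l := by
    intro l h1 h2; rw [hC']; simp [h1, h2]
  have hC'meas : ∀ l, MeasurableSet (C' l) := by
    intro l
    simp only [hC']
    split_ifs
    · exact (hCmeas m).diff hSmeas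
    · exact (hCmeas n).union hSmeas
    · exact hCmeas l
  have hC'disj : Pairwise (Function.onFun Disjoint C') := by
    intro l₁ l₂ hl
    show Disjoint (C' l₁) (C' l₂)
    by_cases h1m : l₁ = m
    · subst h1m; rw [D2]
      by_cases h2n : l₂ = n
      · subst h2n; rw [D3]
        exact Set.disjoint_union_right.2
          ⟨Set.disjoint_of_subset_left Set.diff_subset (hCdisj hl), Set.disjoint_sdiff_left⟩
      · rw [D1 l₂ (Ne.symm hl) h2n]
        exact Set.disjoint_of_subset_left Set.diff_subset (hCdisj hl)
    · by_cases h1n : l₁ = n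
      · subst h1n; rw [D3]
        by_cases h2m : l₂ = m
        · subst h2m; rw [D2]
          exact Set.disjoint_union_left.2
            ⟨Set.disjoint_of_subset_right Set.diff_subset (hCdisj hl),
              Set.disjoint_sdiff_right⟩
        · rw [D1 l₂ h2m (Ne.symm hl)]
          exact Set.disjoint_union_left.2
            ⟨hCdisj hl,
              Set.disjoint_of_subset_left hSC (hCdisj (fun hh : m = l₂ => h2m hh.symm))⟩
      · rw [D1 l₁ h1m h1n]
        by_cases h2m : l₂ = m
        · subst h2m; rw [D2]
          exact Set.disjoint_of_subset_right Set.diff_subset (hCdisj hl)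
        · by_cases h2n : l₂ = n
          · subst h2n; rw [D3]
            exact Set.disjoint_union_right.2
              ⟨hCdisj hl, Set.disjoint_of_subset_right hSC (hCdisj h1m)⟩
          · rw [D1 l₂ h2m h2n]; exact hCdisj hl
  have hC'cover : (⋃ l, C' l) = Set.univ := by
    apply Set.eq_univ_of_forall
    intro x
    have hx : x ∈ ⋃ l, C l := by rw [hCcover]; trivial
    obtain ⟨l, hl⟩ := Set.mem_iUnion.1 hx
    by_cases hxS : x ∈ S
    · refine Set.mem_iUnion.2 ⟨n, ?_⟩
      rw [D3]; exact Or.inr hxS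
    · by_cases hlm : l = m
      · refine Set.mem_iUnion.2 ⟨m, ?_⟩
        rw [D2]; exact ⟨hlm ▸ hl, hxS⟩
      · by_cases hln : l = n
        · refine Set.mem_iUnion.2 ⟨n, ?_⟩
          rw [D3]; exact Or.inl (hln ▸ hl)
        · refine Set.mem_iUnion.2 ⟨l, ?_⟩
          rw [D1 l hlm hln]; exact hl
  have hC'sub : ∀ l, ∀ x ∈ C' l, dist x (z l) = ⨅ m', dist x (z m') := by
    intro l x hx
    by_cases hlm : l = m
    · rw [hlm, D2] at hx
      rw [hlm]; exact hCsub m x hx.1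
    · by_cases hln : l = n
      · rw [hln, D3] at hx
        rw [hln]
        rcases hx with hx | hx
        · exact hCsub n x hx
        · exact hSVn x hx
      · rw [D1 l hlm hln] at hx; exact hCsub l x hx
  -- centroid conditions
  have hCm0 : μ (C m) ≠ 0 := fun h => hSm0 (measure_mono_null hSC h)
  have hm := centroid_cond μ h2 z hmin C hCmeas hCdisj hCcover hCsub m hCm0
  have hC'n0 : μ (C' n) ≠ 0 := by
    rw [D3]
    exact fun h => hSm0 (measure_mono_null Set.subset_union_right h)
  have hn' := centroid_cond μ h2 z hmin C' hC'meas hC'disj hC'cover hC'sub n hC'n0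
  rw [D3] at hn'
  -- `z m` is the barycenter of `S`
  have hTSm : (μ (C m \ S)).toReal • z m = ∫ x in C m \ S, x ∂μ := by
    by_cases h0 : μ (C m \ S) = 0
    · rw [h0, Measure.restrict_eq_zero.2 h0]
      simp
    · have h := centroid_cond μ h2 z hmin C' hC'meas hC'disj hC'cover hC'sub m
        (by rw [D2]; exact h0)
      rwa [D2] at h
  have hSm' : (μ S).toReal • z m = ∫ x in S, x ∂μ :=
    centroid_split μ h2 (z m) hSmeas (hCmeas m) hSC hm hTSm
  -- `z n` is the barycenter of `S`
  have hEq : (C n ∪ S) \ S = C n := by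
    rw [Set.union_diff_right, hCnS.sdiff_eq_left]
  have hByn : (μ ((C n ∪ S) \ S)).toReal • z n = ∫ x in (C n ∪ S) \ S, x ∂μ := by
    rw [hEq]
    by_cases h0 : μ (C n) = 0
    · rw [h0, Measure.restrict_eq_zero.2 h0]
      simp
    · exact centroid_cond μ h2 z hmin C hCmeas hCdisj hCcover hCsub n h0
  have hSn' : (μ S).toReal • z n = ∫ x in S, x ∂μ :=
    centroid_split μ h2 (z n) hSmeas ((hCmeas n).union hSmeas) Set.subset_union_right hn' hByn
  -- contradiction with injectivity
  have htR : (μ S).toReal ≠ 0 := by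
    simp [ENNReal.toReal_eq_zero_iff, hSm0, measure_ne_top μ _]
  have hzmn : z m = z n := by
    have h := hSm'.trans hSn'.symm
    exact smul_right_injective _ htR h
  exact hnm (hinj hzmn).symm
end

section
/- Let μ, ν be Borel probability measures on ℝ^N with finite second moments, let d₂(μ,ν) denote the 2-Wasserstein distance, and let F_{μ,k}, F_{ν,k} denote the k-means functionals. Then for every z = (z_1,...,z_k) ∈ (ℝ^N)^k, |F_{μ,k}(z) - F_{ν,k}(z)| ≤ d₂(μ,ν)·(2 min{√F_{μ,k}(z), √F_{ν,k}(z)} + d₂(μ,ν)). -/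
open MeasureTheory

/-- The 2-Wasserstein distance between two Borel probability measures on `ℝ^N`:
the infimum over couplings `π` of `(∬ |x-y|² dπ)^{1/2}`. -/
noncomputable def wasserstein2 {N : ℕ} (μ ν : Measure (EuclideanSpace ℝ (Fin N))) : ℝ :=
  sInf { r : ℝ | ∃ π : Measure (EuclideanSpace ℝ (Fin N) × EuclideanSpace ℝ (Fin N)),
      π.fst = μ ∧ π.snd = ν ∧ r = Real.sqrt (∫ p, dist p.1 p.2 ^ 2 ∂π) }

/-- The k-means functional `F_{μ,k}(z) = ∫ min_i |x - z_i|² dμ(x)`. -/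
noncomputable def kmeansF {N k : ℕ} (μ : Measure (EuclideanSpace ℝ (Fin N)))
    (z : Fin k → EuclideanSpace ℝ (Fin N)) : ℝ :=
  ∫ x, (⨅ i, dist x (z i)) ^ 2 ∂μ

lemma normLp2_eq {α} [MeasurableSpace α] {π : Measure α} (F : Lp ℝ 2 π) :
    ‖F‖ = Real.sqrt (∫ x, (F x)^2 ∂π) := by
  have h : (∫ x, (F x)^2 ∂π) = ‖F‖^2 := by
    rw [← real_inner_self_eq_norm_sq F, L2.inner_def]
    simp [RCLike.inner_apply, sq]
  rw [h, Real.sqrt_sq (norm_nonneg _)]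

lemma kmeansF_nonneg {N k : ℕ} (μ : Measure (EuclideanSpace ℝ (Fin N)))
    (z : Fin k → EuclideanSpace ℝ (Fin N)) : 0 ≤ kmeansF μ z :=
  integral_nonneg fun _ => sq_nonneg _

lemma key_coupling {N k : ℕ} (hk : 0 < k)
    (z : Fin k → EuclideanSpace ℝ (Fin N))
    (π : Measure (EuclideanSpace ℝ (Fin N) × EuclideanSpace ℝ (Fin N)))
    (μ ν : Measure (EuclideanSpace ℝ (Fin N)))
    (hfst : π.fst = μ) (hsnd : π.snd = ν)
    [IsProbabilityMeasure μ] [IsProbabilityMeasure ν]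
    (h2μ : Integrable (fun x => ‖x‖ ^ 2) μ) (h2ν : Integrable (fun x => ‖x‖ ^ 2) ν) :
    |Real.sqrt (kmeansF μ z) - Real.sqrt (kmeansF ν z)|
      ≤ Real.sqrt (∫ p, dist p.1 p.2 ^ 2 ∂π) := by
  set f : EuclideanSpace ℝ (Fin N) → ℝ := fun x => ⨅ i, dist x (z i) with hf_def
  haveI hi0 : Nonempty (Fin k) := ⟨⟨0, hk⟩⟩
  set i0 : Fin k := ⟨0, hk⟩
  set C : ℝ := ‖z i0‖ with hC
  have hbdd : ∀ x : EuclideanSpace ℝ (Fin N), BddBelow (Set.range fun i => dist x (z i)) := by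
    intro x; exact ⟨0, by rintro _ ⟨i, rfl⟩; exact dist_nonneg⟩
  have hf0 : ∀ x, 0 ≤ f x := fun x => Real.iInf_nonneg fun i => dist_nonneg
  have hfle : ∀ x : EuclideanSpace ℝ (Fin N), f x ≤ ‖x‖ + C := by
    intro x
    refine (ciInf_le (hbdd x) i0).trans ?_
    calc dist x (z i0) = ‖x - z i0‖ := by rw [dist_eq_norm]
      _ ≤ ‖x‖ + ‖z i0‖ := norm_sub_le _ _
  have key : ∀ x y : EuclideanSpace ℝ (Fin N), f x - dist x y ≤ f y := by
    intro x y
    show f x - dist x y ≤ ⨅ i, dist y (z i)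
    refine le_ciInf fun i => ?_
    have hfx : f x ≤ dist x (z i) := ciInf_le (hbdd x) i
    have htri := dist_triangle x y (z i)
    linarith
  have hflip : ∀ x y : EuclideanSpace ℝ (Fin N), |f x - f y| ≤ dist x y := by
    intro x y
    rw [abs_sub_le_iff]
    refine ⟨by linarith [key x y], ?_⟩
    have h := key y x
    rw [dist_comm y x] at h
    linarith
  have hfc : Continuous f := by
    rw [Metric.continuous_iff]
    intro x ε hε
    exact ⟨ε, hε, fun y hy => by
      rw [Real.dist_eq]; exact lt_of_le_of_lt (dist_comm x y ▸ hflip y x) hy⟩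
  haveI : IsProbabilityMeasure π := by
    constructor
    have h := congrArg (fun m : Measure (EuclideanSpace ℝ (Fin N)) => m Set.univ) hfst
    simp only [Measure.fst_univ] at h
    rw [h]
    exact measure_univ
  -- integrability of second moments w.r.t. π
  have h1 : Integrable (fun p : EuclideanSpace ℝ (Fin N) × EuclideanSpace ℝ (Fin N) => ‖p.1‖ ^ 2) π := by
    have hint : Integrable (fun x : EuclideanSpace ℝ (Fin N) => ‖x‖ ^ 2)
        (Measure.map Prod.fst π) := by
      rw [show Measure.map Prod.fst π = μ from hfst]; exact h2μ
    exact (integrable_map_measure ((continuous_norm.pow 2).aestronglyMeasurable)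
      measurable_fst.aemeasurable).mp hint
  have h2 : Integrable (fun p : EuclideanSpace ℝ (Fin N) × EuclideanSpace ℝ (Fin N) => ‖p.2‖ ^ 2) π := by
    have hint : Integrable (fun x : EuclideanSpace ℝ (Fin N) => ‖x‖ ^ 2)
        (Measure.map Prod.snd π) := by
      rw [show Measure.map Prod.snd π = ν from hsnd]; exact h2ν
    exact (integrable_map_measure ((continuous_norm.pow 2).aestronglyMeasurable)
      measurable_snd.aemeasurable).mp hint
  set g : EuclideanSpace ℝ (Fin N) × EuclideanSpace ℝ (Fin N) → ℝ := fun p => f p.1 with hg_def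
  set h : EuclideanSpace ℝ (Fin N) × EuclideanSpace ℝ (Fin N) → ℝ := fun p => f p.2 with hh_def
  have hgm : AEStronglyMeasurable g π := (hfc.comp continuous_fst).aestronglyMeasurable
  have hhm : AEStronglyMeasurable h π := (hfc.comp continuous_snd).aestronglyMeasurable
  have hgsq : Integrable (fun p => g p ^ 2) π := by
    refine ((h1.const_mul 2).add (integrable_const (2 * C ^ 2))).mono (hgm.pow 2) ?_
    filter_upwards with p
    simp only [Pi.add_apply, Real.norm_eq_abs]
    rw [abs_of_nonneg (sq_nonneg _), abs_of_nonneg (by positivity)]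
    nlinarith [hf0 p.1, hfle p.1, sq_nonneg (‖p.1‖ - C),
      mul_self_le_mul_self (hf0 p.1) (hfle p.1)]
  have hhsq : Integrable (fun p => h p ^ 2) π := by
    refine ((h2.const_mul 2).add (integrable_const (2 * C ^ 2))).mono (hhm.pow 2) ?_
    filter_upwards with p
    simp only [Pi.add_apply, Real.norm_eq_abs]
    rw [abs_of_nonneg (sq_nonneg _), abs_of_nonneg (by positivity)]
    nlinarith [hf0 p.2, hfle p.2, sq_nonneg (‖p.2‖ - C),
      mul_self_le_mul_self (hf0 p.2) (hfle p.2)]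
  have hdist : Integrable (fun p : EuclideanSpace ℝ (Fin N) × EuclideanSpace ℝ (Fin N) => dist p.1 p.2 ^ 2) π := by
    refine (((h1.const_mul 2).add (h2.const_mul 2))).mono
      (((continuous_dist.comp (continuous_fst.prodMk continuous_snd)).pow 2).aestronglyMeasurable) ?_
    filter_upwards with p
    have hd : dist p.1 p.2 ≤ ‖p.1‖ + ‖p.2‖ := by
      rw [dist_eq_norm]; exact norm_sub_le _ _
    simp only [Pi.add_apply, Real.norm_eq_abs, Function.comp]
    rw [abs_of_nonneg (sq_nonneg _), abs_of_nonneg (by positivity)]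
    nlinarith [sq_nonneg (‖p.1‖ - ‖p.2‖), dist_nonneg (x := p.1) (y := p.2),
      mul_self_le_mul_self (dist_nonneg (x := p.1) (y := p.2)) hd]
  have hgLp : MemLp g 2 π := (memLp_two_iff_integrable_sq hgm).mpr hgsq
  have hhLp : MemLp h 2 π := (memLp_two_iff_integrable_sq hhm).mpr hhsq
  -- identify the integrals
  have hμint : kmeansF μ z = ∫ p, g p ^ 2 ∂π := by
    rw [kmeansF, ← hfst, Measure.fst,
      integral_map (f := fun x => (⨅ i, dist x (z i)) ^ 2) measurable_fst.aemeasurable ((hfc.pow 2).aestronglyMeasurable)]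
  have hνint : kmeansF ν z = ∫ p, h p ^ 2 ∂π := by
    rw [kmeansF, ← hsnd, Measure.snd,
      integral_map (f := fun x => (⨅ i, dist x (z i)) ^ 2) measurable_snd.aemeasurable ((hfc.pow 2).aestronglyMeasurable)]
  set G : Lp ℝ 2 π := hgLp.toLp g
  set H : Lp ℝ 2 π := hhLp.toLp h
  have hGnorm : ‖G‖ = Real.sqrt (kmeansF μ z) := by
    rw [normLp2_eq, hμint]
    congr 1
    refine integral_congr_ae ?_
    filter_upwards [hgLp.coeFn_toLp] with x hx
    simp [G, hx]
  have hHnorm : ‖H‖ = Real.sqrt (kmeansF ν z) := by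
    rw [normLp2_eq, hνint]
    congr 1
    refine integral_congr_ae ?_
    filter_upwards [hhLp.coeFn_toLp] with x hx
    simp [H, hx]
  have hGH : ‖G - H‖ ≤ Real.sqrt (∫ p, dist p.1 p.2 ^ 2 ∂π) := by
    rw [← MemLp.toLp_sub hgLp hhLp, normLp2_eq]
    have heq : ∫ x, (((hgLp.sub hhLp).toLp (g - h)) x) ^ 2 ∂π = ∫ p, (g p - h p) ^ 2 ∂π := by
      refine integral_congr_ae ?_
      filter_upwards [(hgLp.sub hhLp).coeFn_toLp] with x hx
      simp [hx]
    rw [heq]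
    apply Real.sqrt_le_sqrt
    refine integral_mono ((hgLp.sub hhLp).integrable_sq) hdist fun p => ?_
    have := hflip p.1 p.2
    calc (g p - h p) ^ 2 = |g p - h p| ^ 2 := (sq_abs _).symm
      _ ≤ dist p.1 p.2 ^ 2 := pow_le_pow_left₀ (abs_nonneg _) this _
  calc |Real.sqrt (kmeansF μ z) - Real.sqrt (kmeansF ν z)| = |‖G‖ - ‖H‖| := by
        rw [hGnorm, hHnorm]
    _ ≤ ‖G - H‖ := abs_norm_sub_norm_le _ _
    _ ≤ Real.sqrt (∫ p, dist p.1 p.2 ^ 2 ∂π) := hGH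

/-- Stability of the k-means functional with respect to the Wasserstein distance:
`|F_{μ,k}(z) - F_{ν,k}(z)| ≤ d₂(μ,ν)(2 min{√F_{μ,k}(z), √F_{ν,k}(z)} + d₂(μ,ν))`. -/
theorem kmeans_wasserstein_stability (N k : ℕ) (hk : 0 < k)
    (μ ν : Measure (EuclideanSpace ℝ (Fin N)))
    [IsProbabilityMeasure μ] [IsProbabilityMeasure ν]
    (h2μ : Integrable (fun x => ‖x‖ ^ 2) μ) (h2ν : Integrable (fun x => ‖x‖ ^ 2) ν)
    (z : Fin k → EuclideanSpace ℝ (Fin N)) :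
    |kmeansF μ z - kmeansF ν z|
      ≤ wasserstein2 μ ν *
        (2 * min (Real.sqrt (kmeansF μ z)) (Real.sqrt (kmeansF ν z)) + wasserstein2 μ ν) := by
  set S := { r : ℝ | ∃ π : Measure (EuclideanSpace ℝ (Fin N) × EuclideanSpace ℝ (Fin N)),
      π.fst = μ ∧ π.snd = ν ∧ r = Real.sqrt (∫ p, dist p.1 p.2 ^ 2 ∂π) } with hS
  have hSne : S.Nonempty :=
    ⟨_, μ.prod ν, Measure.fst_prod, Measure.snd_prod, rfl⟩
  have hW0 : 0 ≤ wasserstein2 μ ν := by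
    apply Real.sInf_nonneg
    rintro r ⟨π, _, _, rfl⟩
    exact Real.sqrt_nonneg _
  set a := Real.sqrt (kmeansF μ z) with ha
  set b := Real.sqrt (kmeansF ν z) with hb
  have hkey : |a - b| ≤ wasserstein2 μ ν := by
    apply le_csInf hSne
    rintro r ⟨π, hfst, hsnd, rfl⟩
    exact key_coupling hk z π μ ν hfst hsnd h2μ h2ν
  have ha0 : 0 ≤ a := Real.sqrt_nonneg _
  have hb0 : 0 ≤ b := Real.sqrt_nonneg _
  have haa : kmeansF μ z = a ^ 2 := (Real.sq_sqrt (kmeansF_nonneg μ z)).symm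
  have hbb : kmeansF ν z = b ^ 2 := (Real.sq_sqrt (kmeansF_nonneg ν z)).symm
  rw [haa, hbb]
  have h1 : |a ^ 2 - b ^ 2| = |a - b| * (a + b) := by
    have hab0 : (0:ℝ) ≤ a + b := by linarith
    rw [show a ^ 2 - b ^ 2 = (a - b) * (a + b) by ring, abs_mul, abs_of_nonneg hab0]
  rw [h1]
  have hsum : a + b ≤ 2 * min a b + wasserstein2 μ ν := by
    rcases le_total a b with hab | hab
    · have hle : b - a ≤ wasserstein2 μ ν :=
        le_trans (le_abs_self (b - a)) (by rw [abs_sub_comm]; exact hkey)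
      rw [min_eq_left hab]; linarith
    · have hle : a - b ≤ wasserstein2 μ ν := le_trans (le_abs_self _) hkey
      rw [min_eq_right hab]; linarith
  exact mul_le_mul hkey hsum (by linarith) hW0
end

section
/- Let μ_n, μ be Borel probability measures on ℝ^N with finite second moments, with μ_n → μ in the Wasserstein sense. Let A_n be μ_n-measurable sets and A a μ-measurable set. Then (μ_n, χ_{A_n}) → (μ, χ_A) in TL² if and only if the restricted measures μ_n⌊A_n converge weakly to μ⌊A. -/
set_option maxHeartbeats 1000000

open MeasureTheory Filter

/-- The `TL²` distance between `(μ, f)` and `(θ, g)`. -/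
noncomputable def dTL2 {N : ℕ} (μ θ : Measure (EuclideanSpace ℝ (Fin N)))
    (f g : EuclideanSpace ℝ (Fin N) → ℝ) : ℝ :=
  sInf { r : ℝ | ∃ π : Measure (EuclideanSpace ℝ (Fin N) × EuclideanSpace ℝ (Fin N)),
      π.fst = μ ∧ π.snd = θ ∧
      r = Real.sqrt (∫ p, dist p.1 p.2 ^ 2 + dist (f p.1) (g p.2) ^ 2 ∂π) }

/- ### Auxiliary lemmas -/

section Aux

variable {α β : Type*} [MeasurableSpace α] [MeasurableSpace β]

lemma coupling_isProbabilityMeasure {π : Measure (α × β)} {ν : Measure α}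
    [IsProbabilityMeasure ν] (h : π.fst = ν) : IsProbabilityMeasure π := by
  constructor
  have h' : π.fst Set.univ = 1 := by rw [h]; exact measure_univ
  rwa [Measure.fst_apply MeasurableSet.univ, Set.preimage_univ] at h'

lemma integral_fst_marginal {π : Measure (α × β)} {ν : Measure α} (h : π.fst = ν)
    {g : α → ℝ} (hg : AEStronglyMeasurable g ν) :
    ∫ p, g p.1 ∂π = ∫ x, g x ∂ν := by
  have h' : π.map Prod.fst = ν := h
  rw [← h'] at hg ⊢
  exact (integral_map measurable_fst.aemeasurable hg).symm

lemma integral_snd_marginal {π : Measure (α × β)} {ν : Measure β} (h : π.snd = ν)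
    {g : β → ℝ} (hg : AEStronglyMeasurable g ν) :
    ∫ p, g p.2 ∂π = ∫ x, g x ∂ν := by
  have h' : π.map Prod.snd = ν := h
  rw [← h'] at hg ⊢
  exact (integral_map measurable_snd.aemeasurable hg).symm

lemma integrable_fst_marginal {π : Measure (α × β)} {ν : Measure α} (h : π.fst = ν)
    {g : α → ℝ} (hg : AEStronglyMeasurable g ν) (hgi : Integrable g ν) :
    Integrable (fun p : α × β => g p.1) π := by
  have h' : π.map Prod.fst = ν := h
  rw [← h'] at hg hgi
  exact (integrable_map_measure hg measurable_fst.aemeasurable).1 hgi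

lemma integrable_snd_marginal {π : Measure (α × β)} {ν : Measure β} (h : π.snd = ν)
    {g : β → ℝ} (hg : AEStronglyMeasurable g ν) (hgi : Integrable g ν) :
    Integrable (fun p : α × β => g p.2) π := by
  have h' : π.map Prod.snd = ν := h
  rw [← h'] at hg hgi
  exact (integrable_map_measure hg measurable_snd.aemeasurable).1 hgi

lemma integrable_bdd {γ : Type*} [MeasurableSpace γ] {π : Measure γ} [IsFiniteMeasure π]
    {g : γ → ℝ} (hg : AEStronglyMeasurable g π) {C : ℝ} (h : ∀ x, |g x| ≤ C) :
    Integrable g π :=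
  Integrable.mono' (integrable_const C) hg
    (Filter.Eventually.of_forall fun x => by simpa [Real.norm_eq_abs] using h x)

lemma tendsto_zero_of_ev {u : ℕ → ℝ} (h0 : ∀ n, 0 ≤ u n)
    (h : ∀ ε : ℝ, 0 < ε → ∀ᶠ n in atTop, u n < ε) : Tendsto u atTop (nhds 0) := by
  rw [Metric.tendsto_atTop]
  intro ε hε
  obtain ⟨M, hM⟩ := eventually_atTop.1 (h ε hε)
  exact ⟨M, fun n hn => by
    rw [dist_zero_right, Real.norm_eq_abs, abs_of_nonneg (h0 n)]; exact hM n hn⟩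

lemma le_add_sq_div {t c : ℝ} (ht : 0 ≤ t) (hc : 0 < c) : t ≤ c + t ^ 2 / c := by
  have h : c + t ^ 2 / c = (c ^ 2 + t ^ 2) / c := by field_simp
  rw [h, le_div_iff₀ hc]
  nlinarith [sq_nonneg (t - c)]

end Aux

section Euclid

variable {N : ℕ}

local notation "E" => EuclideanSpace ℝ (Fin N)

lemma integrable_dist_sq {π : Measure (E × E)} {μ1 μ2 : Measure E}
    (h1 : π.fst = μ1) (h2 : π.snd = μ2)
    (hi1 : Integrable (fun x => ‖x‖ ^ 2) μ1) (hi2 : Integrable (fun x => ‖x‖ ^ 2) μ2) :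
    Integrable (fun p : E × E => dist p.1 p.2 ^ 2) π := by
  have m1 : Integrable (fun p : E × E => ‖p.1‖ ^ 2) π :=
    integrable_fst_marginal h1 hi1.aestronglyMeasurable hi1
  have m2 : Integrable (fun p : E × E => ‖p.2‖ ^ 2) π :=
    integrable_snd_marginal h2 hi2.aestronglyMeasurable hi2
  refine ((m1.const_mul 2).add (m2.const_mul 2)).mono'
    ((continuous_dist.pow 2).aestronglyMeasurable) (Filter.Eventually.of_forall fun p => ?_)
  have hd : dist p.1 p.2 ≤ ‖p.1‖ + ‖p.2‖ := dist_le_norm_add_norm _ _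
  have h0 : (0:ℝ) ≤ dist p.1 p.2 := dist_nonneg
  simp only [Pi.add_apply]
  rw [Real.norm_eq_abs, abs_of_nonneg (by positivity)]
  have h1 : dist p.1 p.2 ^ 2 ≤ (‖p.1‖ + ‖p.2‖) ^ 2 := pow_le_pow_left₀ h0 hd 2
  nlinarith [sq_nonneg (‖p.1‖ - ‖p.2‖)]

lemma dTL2_nonneg (μ θ : Measure E) [IsProbabilityMeasure μ] [IsProbabilityMeasure θ]
    (f g : E → ℝ) : 0 ≤ dTL2 μ θ f g := by
  unfold dTL2
  have hne : Set.Nonempty { r : ℝ | ∃ π : Measure (E × E),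
      π.fst = μ ∧ π.snd = θ ∧
      r = Real.sqrt (∫ p, dist p.1 p.2 ^ 2 + dist (f p.1) (g p.2) ^ 2 ∂π) } :=
    ⟨_, ⟨μ.prod θ, Measure.fst_prod, Measure.snd_prod, rfl⟩⟩
  refine le_csInf hne ?_
  rintro b ⟨π, -, -, rfl⟩
  exact Real.sqrt_nonneg _

lemma wasserstein2_nonneg (μ θ : Measure E) [IsProbabilityMeasure μ] [IsProbabilityMeasure θ] :
    0 ≤ wasserstein2 μ θ := by
  unfold wasserstein2
  have hne : Set.Nonempty { r : ℝ | ∃ π : Measure (E × E),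
      π.fst = μ ∧ π.snd = θ ∧ r = Real.sqrt (∫ p, dist p.1 p.2 ^ 2 ∂π) } :=
    ⟨_, ⟨μ.prod θ, Measure.fst_prod, Measure.snd_prod, rfl⟩⟩
  refine le_csInf hne ?_
  rintro b ⟨π, -, -, rfl⟩
  exact Real.sqrt_nonneg _

lemma dTL2_le (μ θ : Measure E) (f g : E → ℝ) {π : Measure (E × E)}
    (h1 : π.fst = μ) (h2 : π.snd = θ) :
    dTL2 μ θ f g ≤ Real.sqrt (∫ p, dist p.1 p.2 ^ 2 + dist (f p.1) (g p.2) ^ 2 ∂π) := by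
  unfold dTL2
  apply csInf_le
  · exact ⟨0, by rintro b ⟨π', -, -, rfl⟩; exact Real.sqrt_nonneg _⟩
  · exact ⟨π, h1, h2, rfl⟩

lemma exists_coupling_dTL2 (μ θ : Measure E) [IsProbabilityMeasure μ] [IsProbabilityMeasure θ]
    (f g : E → ℝ) {ε : ℝ} (hε : 0 < ε) :
    ∃ π : Measure (E × E), π.fst = μ ∧ π.snd = θ ∧
      Real.sqrt (∫ p, dist p.1 p.2 ^ 2 + dist (f p.1) (g p.2) ^ 2 ∂π) < dTL2 μ θ f g + ε := by
  unfold dTL2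
  have hne : Set.Nonempty { r : ℝ | ∃ π : Measure (E × E),
      π.fst = μ ∧ π.snd = θ ∧
      r = Real.sqrt (∫ p, dist p.1 p.2 ^ 2 + dist (f p.1) (g p.2) ^ 2 ∂π) } :=
    ⟨_, ⟨μ.prod θ, Measure.fst_prod, Measure.snd_prod, rfl⟩⟩
  obtain ⟨a, ha, hlt⟩ := Real.lt_sInf_add_pos hne hε
  obtain ⟨π, h1, h2, rfl⟩ := ha
  exact ⟨π, h1, h2, hlt⟩

lemma exists_coupling_W2 (μ θ : Measure E) [IsProbabilityMeasure μ] [IsProbabilityMeasure θ]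
    {ε : ℝ} (hε : 0 < ε) :
    ∃ π : Measure (E × E), π.fst = μ ∧ π.snd = θ ∧
      Real.sqrt (∫ p, dist p.1 p.2 ^ 2 ∂π) < wasserstein2 μ θ + ε := by
  unfold wasserstein2
  have hne : Set.Nonempty { r : ℝ | ∃ π : Measure (E × E),
      π.fst = μ ∧ π.snd = θ ∧ r = Real.sqrt (∫ p, dist p.1 p.2 ^ 2 ∂π) } :=
    ⟨_, ⟨μ.prod θ, Measure.fst_prod, Measure.snd_prod, rfl⟩⟩
  obtain ⟨a, ha, hlt⟩ := Real.lt_sInf_add_pos hne hε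
  obtain ⟨π, h1, h2, rfl⟩ := ha
  exact ⟨π, h1, h2, hlt⟩

lemma integral_restrict_eq_indicator_mul {γ : Type*} [MeasurableSpace γ] (ν : Measure γ)
    {S : Set γ} (hS : MeasurableSet S) (g : γ → ℝ) :
    ∫ x, g x ∂ν.restrict S = ∫ x, S.indicator (fun _ => (1:ℝ)) x * g x ∂ν := by
  rw [← integral_indicator hS]
  congr 1
  ext x
  by_cases hx : x ∈ S <;> simp [hx]

lemma urysohn_aux {γ : Type*} [MetricSpace γ] {K U : Set γ} (hKc : IsCompact K)
    (hKne : K.Nonempty) (hUopen : IsOpen U) (hKU : K ⊆ U) :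
    ∃ (g : γ → ℝ) (r : ℝ), 0 < r ∧ Continuous g ∧ (∀ x, 0 ≤ g x) ∧ (∀ x, g x ≤ 1) ∧
      (∀ x ∈ K, g x = 1) ∧ (∀ x, x ∉ U → g x = 0) ∧
      ∀ x y, |g x - g y| ≤ dist x y / r := by
  obtain ⟨r, hr, hrsub⟩ := hKc.exists_thickening_subset_open hUopen hKU
  refine ⟨fun x => max (1 - Metric.infDist x K / r) 0, r, hr, ?_, ?_, ?_, ?_, ?_, ?_⟩
  · exact (continuous_const.sub ((Metric.continuous_infDist_pt K).div_const r)).max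
      continuous_const
  · exact fun x => le_max_right _ _
  · intro x
    have h0 : 0 ≤ Metric.infDist x K := Metric.infDist_nonneg
    have : 0 ≤ Metric.infDist x K / r := div_nonneg h0 hr.le
    apply max_le _ zero_le_one
    linarith
  · intro x hx
    dsimp only
    rw [Metric.infDist_zero_of_mem hx]
    norm_num
  · intro x hx
    have hnot : x ∉ Metric.thickening r K := fun hmem => hx (hrsub hmem)
    have hge : r ≤ Metric.infDist x K := by
      by_contra hlt'
      push_neg at hlt'
      exact hnot ((Metric.mem_thickening_iff_infDist_lt hKne).2 hlt')
    have h1 : (1:ℝ) ≤ Metric.infDist x K / r := by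
      rw [le_div_iff₀ hr, one_mul]; exact hge
    exact max_eq_right (by linarith)
  · intro x y
    have h1 : |max (1 - Metric.infDist x K / r) 0 - max (1 - Metric.infDist y K / r) 0|
        ≤ |(1 - Metric.infDist x K / r) - (1 - Metric.infDist y K / r)| :=
      abs_max_sub_max_le_abs _ _ _
    have h2 : (1 - Metric.infDist x K / r) - (1 - Metric.infDist y K / r)
        = (Metric.infDist y K - Metric.infDist x K) / r := by ring
    rw [h2, abs_div, abs_of_pos hr] at h1
    have h3 : |Metric.infDist y K - Metric.infDist x K| ≤ dist x y := by
      rw [abs_sub_le_iff]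
      constructor
      · have h4 := Metric.infDist_le_infDist_add_dist (x := y) (y := x) (s := K)
        have h5 : dist y x = dist x y := dist_comm _ _
        linarith
      · have h4 := Metric.infDist_le_infDist_add_dist (x := x) (y := y) (s := K)
        linarith
    refine h1.trans ?_
    gcongr

end Euclid

section Main

variable {N : ℕ}

local notation "E" => EuclideanSpace ℝ (Fin N)

theorem forward_half (μ : Measure E) [IsProbabilityMeasure μ]
    (h2 : Integrable (fun x => ‖x‖ ^ 2) μ)
    (μs : ℕ → Measure E)
    (hprob : ∀ n, IsProbabilityMeasure (μs n))
    (h2s : ∀ n, Integrable (fun x => ‖x‖ ^ 2) (μs n))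
    (A : Set E) (hA : MeasurableSet A)
    (As : ℕ → Set E) (hAs : ∀ n, MeasurableSet (As n))
    (hTL : Tendsto (fun n => dTL2 (μs n) μ
        ((As n).indicator fun _ => (1 : ℝ)) (A.indicator fun _ => (1 : ℝ)))
      atTop (nhds 0))
    (f : BoundedContinuousFunction E ℝ) :
    Tendsto (fun n => ∫ x, f x ∂((μs n).restrict (As n))) atTop
      (nhds (∫ x, f x ∂(μ.restrict A))) := by
  have mχA : Measurable (A.indicator fun _ => (1:ℝ)) := measurable_const.indicator hA
  have mχs : ∀ n, Measurable ((As n).indicator fun _ => (1:ℝ)) :=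
    fun n => measurable_const.indicator (hAs n)
  have χA01 : ∀ x, 0 ≤ A.indicator (fun _ => (1:ℝ)) x ∧ A.indicator (fun _ => (1:ℝ)) x ≤ 1 := by
    intro x; by_cases hx : x ∈ A <;> simp [hx]
  have χs01 : ∀ n x, 0 ≤ (As n).indicator (fun _ => (1:ℝ)) x ∧
      (As n).indicator (fun _ => (1:ℝ)) x ≤ 1 := by
    intro n x; by_cases hx : x ∈ As n <;> simp [hx]
  have hsel : ∀ n, ∃ π : Measure (E × E), π.fst = μs n ∧ π.snd = μ ∧
      Real.sqrt (∫ p, dist p.1 p.2 ^ 2 +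
        dist ((As n).indicator (fun _ => (1:ℝ)) p.1) (A.indicator (fun _ => (1:ℝ)) p.2) ^ 2 ∂π) <
      dTL2 (μs n) μ ((As n).indicator fun _ => (1:ℝ)) (A.indicator fun _ => (1:ℝ))
        + 1/((n:ℝ)+1) := by
    intro n
    haveI := hprob n
    exact exists_coupling_dTL2 (μs n) μ _ _ (by positivity)
  choose π hfst hsnd hlt using hsel
  have hπprob : ∀ n, IsProbabilityMeasure (π n) := fun n => by
    haveI := hprob n; exact coupling_isProbabilityMeasure (hfst n)
  have Id2 : ∀ n, Integrable (fun p : E × E => dist p.1 p.2 ^ 2) (π n) :=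
    fun n => integrable_dist_sq (hfst n) (hsnd n) (h2s n) h2
  have mΔ : ∀ n, Measurable (fun p : E × E =>
      dist ((As n).indicator (fun _ => (1:ℝ)) p.1) (A.indicator (fun _ => (1:ℝ)) p.2) ^ 2) :=
    fun n => (((mχs n).comp measurable_fst).dist (mχA.comp measurable_snd)).pow_const 2
  have IΔ : ∀ n, Integrable (fun p : E × E =>
      dist ((As n).indicator (fun _ => (1:ℝ)) p.1) (A.indicator (fun _ => (1:ℝ)) p.2) ^ 2)
      (π n) := by
    intro n
    haveI := hπprob n
    refine integrable_bdd (mΔ n).aestronglyMeasurable (C := 1) fun p => ?_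
    obtain ⟨ha0, ha1⟩ := χs01 n p.1
    obtain ⟨hb0, hb1⟩ := χA01 p.2
    rw [abs_of_nonneg (by positivity), Real.dist_eq]
    have h1 : |(As n).indicator (fun _ => (1:ℝ)) p.1 - A.indicator (fun _ => (1:ℝ)) p.2| ≤ 1 := by
      rw [abs_le]; constructor <;> linarith
    have := pow_le_pow_left₀ (abs_nonneg _) h1 2
    simpa using this
  have ht0 : ∀ n, 0 ≤ ∫ p, dist p.1 p.2 ^ 2 +
      dist ((As n).indicator (fun _ => (1:ℝ)) p.1) (A.indicator (fun _ => (1:ℝ)) p.2) ^ 2 ∂π n :=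
    fun n => integral_nonneg fun p => by positivity
  have hsq : Tendsto (fun n => Real.sqrt (∫ p, dist p.1 p.2 ^ 2 +
      dist ((As n).indicator (fun _ => (1:ℝ)) p.1) (A.indicator (fun _ => (1:ℝ)) p.2) ^ 2 ∂π n))
      atTop (nhds 0) := by
    have h1 : Tendsto (fun n : ℕ => dTL2 (μs n) μ
        ((As n).indicator fun _ => (1 : ℝ)) (A.indicator fun _ => (1 : ℝ)) + 1/((n:ℝ)+1))
        atTop (nhds 0) := by
      have := hTL.add tendsto_one_div_add_atTop_nhds_zero_nat
      simpa using this
    exact squeeze_zero (fun n => Real.sqrt_nonneg _) (fun n => (hlt n).le) h1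
  have htn : Tendsto (fun n => ∫ p, dist p.1 p.2 ^ 2 +
      dist ((As n).indicator (fun _ => (1:ℝ)) p.1) (A.indicator (fun _ => (1:ℝ)) p.2) ^ 2 ∂π n)
      atTop (nhds 0) := by
    have h1 := hsq.pow 2
    have h2' : (fun n => Real.sqrt (∫ p, dist p.1 p.2 ^ 2 +
        dist ((As n).indicator (fun _ => (1:ℝ)) p.1) (A.indicator (fun _ => (1:ℝ)) p.2) ^ 2
        ∂π n) ^ 2) = fun n => ∫ p, dist p.1 p.2 ^ 2 +
        dist ((As n).indicator (fun _ => (1:ℝ)) p.1) (A.indicator (fun _ => (1:ℝ)) p.2) ^ 2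
        ∂π n := funext fun n => Real.sq_sqrt (ht0 n)
    rw [h2'] at h1
    simpa using h1
  have hadd : ∀ n, (∫ p, dist p.1 p.2 ^ 2 +
      dist ((As n).indicator (fun _ => (1:ℝ)) p.1) (A.indicator (fun _ => (1:ℝ)) p.2) ^ 2 ∂π n)
      = (∫ p, dist p.1 p.2 ^ 2 ∂π n) + ∫ p,
        dist ((As n).indicator (fun _ => (1:ℝ)) p.1) (A.indicator (fun _ => (1:ℝ)) p.2) ^ 2 ∂π n :=
    fun n => integral_add (Id2 n) (IΔ n)
  have ha0 : ∀ n, 0 ≤ ∫ p, dist p.1 p.2 ^ 2 ∂π n :=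
    fun n => integral_nonneg fun p => by positivity
  have hb0 : ∀ n, 0 ≤ ∫ p,
      dist ((As n).indicator (fun _ => (1:ℝ)) p.1) (A.indicator (fun _ => (1:ℝ)) p.2) ^ 2 ∂π n :=
    fun n => integral_nonneg fun p => by positivity
  have han : Tendsto (fun n => ∫ p, dist p.1 p.2 ^ 2 ∂π n) atTop (nhds 0) := by
    refine squeeze_zero ha0 (fun n => ?_) htn
    rw [hadd n]
    exact le_add_of_nonneg_right (hb0 n)
  have hbn : Tendsto (fun n => ∫ p,
      dist ((As n).indicator (fun _ => (1:ℝ)) p.1) (A.indicator (fun _ => (1:ℝ)) p.2) ^ 2 ∂π n)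
      atTop (nhds 0) := by
    refine squeeze_zero hb0 (fun n => ?_) htn
    rw [hadd n]
    exact le_add_of_nonneg_left (ha0 n)
  have hMf : ∀ x, |f x| ≤ ‖f‖ := fun x => by
    have := f.norm_coe_le_norm x; rwa [Real.norm_eq_abs] at this
  have mf : Measurable (f : E → ℝ) := f.continuous.measurable
  have hres1 : ∀ n, ∫ x, f x ∂((μs n).restrict (As n)) =
      ∫ p, (As n).indicator (fun _ => (1:ℝ)) p.1 * f p.1 ∂π n := by
    intro n
    rw [integral_restrict_eq_indicator_mul (μs n) (hAs n) f]
    exact (integral_fst_marginal (hfst n) ((mχs n).mul mf).aestronglyMeasurable).symm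
  have hres2 : ∀ n, ∫ x, f x ∂(μ.restrict A) =
      ∫ p, A.indicator (fun _ => (1:ℝ)) p.2 * f p.2 ∂π n := by
    intro n
    rw [integral_restrict_eq_indicator_mul μ hA f]
    exact (integral_snd_marginal (hsnd n) (mχA.mul mf).aestronglyMeasurable).symm
  have I1 : ∀ n, Integrable (fun p : E × E =>
      (As n).indicator (fun _ => (1:ℝ)) p.1 * f p.1) (π n) := by
    intro n
    haveI := hπprob n
    refine integrable_bdd
      (((mχs n).comp measurable_fst).mul (mf.comp measurable_fst)).aestronglyMeasurable
      (C := ‖f‖) fun p => ?_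
    obtain ⟨h0', h1'⟩ := χs01 n p.1
    rw [abs_mul]
    have : |(As n).indicator (fun _ => (1:ℝ)) p.1| * |f p.1| ≤ 1 * ‖f‖ :=
      mul_le_mul (by rwa [abs_of_nonneg h0']) (hMf p.1) (abs_nonneg _) zero_le_one
    simpa using this
  have I2 : ∀ n, Integrable (fun p : E × E =>
      A.indicator (fun _ => (1:ℝ)) p.2 * f p.2) (π n) := by
    intro n
    haveI := hπprob n
    refine integrable_bdd
      ((mχA.comp measurable_snd).mul (mf.comp measurable_snd)).aestronglyMeasurable
      (C := ‖f‖) fun p => ?_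
    obtain ⟨h0', h1'⟩ := χA01 p.2
    rw [abs_mul]
    have : |A.indicator (fun _ => (1:ℝ)) p.2| * |f p.2| ≤ 1 * ‖f‖ :=
      mul_le_mul (by rwa [abs_of_nonneg h0']) (hMf p.2) (abs_nonneg _) zero_le_one
    simpa using this
  have hIQ : ∀ n, Integrable (fun p : E × E => |f p.1 - f p.2|) (π n) := by
    intro n
    haveI := hπprob n
    refine integrable_bdd
      ((mf.comp measurable_fst).sub (mf.comp measurable_snd)).abs.aestronglyMeasurable
      (C := ‖f‖ + ‖f‖) fun p => ?_
    rw [abs_abs]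
    exact (abs_sub (f p.1) (f p.2)).trans (add_le_add (hMf _) (hMf _))
  have hkey : ∀ n, ∀ p : E × E,
      |(As n).indicator (fun _ => (1:ℝ)) p.1 * f p.1 - A.indicator (fun _ => (1:ℝ)) p.2 * f p.2|
      ≤ ‖f‖ * dist ((As n).indicator (fun _ => (1:ℝ)) p.1) (A.indicator (fun _ => (1:ℝ)) p.2) ^ 2
        + |f p.1 - f p.2| := by
    intro n p
    have hM0 : (0:ℝ) ≤ ‖f‖ := norm_nonneg f
    rcases Classical.em (p.1 ∈ As n) with h1 | h1 <;> rcases Classical.em (p.2 ∈ A) with h2' | h2'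
    · simp only [Set.indicator_of_mem h1, Set.indicator_of_mem h2', one_mul, dist_self]
      simp
    · simp only [Set.indicator_of_mem h1, Set.indicator_of_notMem h2', one_mul, zero_mul,
        sub_zero, Real.dist_eq]
      have h3 := hMf p.1
      have h4 := abs_nonneg (f p.1 - f p.2)
      norm_num
      linarith
    · simp only [Set.indicator_of_notMem h1, Set.indicator_of_mem h2', one_mul, zero_mul,
        zero_sub, abs_neg, Real.dist_eq]
      have h3 := hMf p.2
      have h4 := abs_nonneg (f p.1 - f p.2)
      norm_num
      linarith
    · simp only [Set.indicator_of_notMem h1, Set.indicator_of_notMem h2', zero_mul,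
        sub_zero, dist_self, abs_zero]
      positivity
  have hQ0 : ∀ n, 0 ≤ ∫ p, |f p.1 - f p.2| ∂π n :=
    fun n => integral_nonneg fun p => abs_nonneg _
  have hQtend : Tendsto (fun n => ∫ p, |f p.1 - f p.2| ∂π n) atTop (nhds 0) := by
    apply tendsto_zero_of_ev hQ0
    intro ε hε
    have hpos : (0:ℝ) < ε / (6 * (‖f‖ + 1)) := by positivity
    obtain ⟨K, -, hKc, hKlt⟩ := MeasurableSet.univ.exists_isCompact_diff_lt
      (measure_ne_top μ _) (ε := ENNReal.ofReal (ε / (6 * (‖f‖ + 1))))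
      (ne_of_gt (ENNReal.ofReal_pos.2 hpos))
    have hcompl : Set.univ \ K = Kᶜ := by ext x; simp
    rw [hcompl] at hKlt
    have hKsmall : (μ Kᶜ).toReal < ε / (6 * (‖f‖ + 1)) := by
      have h1 := ENNReal.toReal_strict_mono ENNReal.ofReal_ne_top hKlt
      rwa [ENNReal.toReal_ofReal hpos.le] at h1
    have hK1 : IsCompact (Metric.cthickening 1 K) := hKc.cthickening
    have huc := hK1.uniformContinuousOn_of_continuous f.continuous.continuousOn
    rw [Metric.uniformContinuousOn_iff] at huc
    obtain ⟨δ₀, hδ₀, hδprop⟩ := huc (ε/6) (by positivity)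
    set δ := min δ₀ 1 with hδdef
    have hδpos : 0 < δ := lt_min hδ₀ one_pos
    have hδ1 : δ ≤ 1 := min_le_right _ _
    have hM0 : (0:ℝ) ≤ ‖f‖ := norm_nonneg f
    have hpt : ∀ p : E × E, |f p.1 - f p.2| ≤ ε/6
        + (2*‖f‖) * (Kᶜ.indicator (fun _ => (1:ℝ)) p.2)
        + (2*‖f‖/δ^2) * dist p.1 p.2 ^ 2 := by
      intro p
      have hind0 : 0 ≤ Kᶜ.indicator (fun _ => (1:ℝ)) p.2 :=
        Set.indicator_nonneg (fun _ _ => zero_le_one) _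
      have ht3 : 0 ≤ (2*‖f‖/δ^2) * dist p.1 p.2 ^ 2 := by positivity
      have hi2 : 0 ≤ 2*‖f‖ * Kᶜ.indicator (fun _ => (1:ℝ)) p.2 :=
        mul_nonneg (by linarith) hind0
      have h2M : |f p.1 - f p.2| ≤ 2*‖f‖ := by
        have h5 := abs_sub (f p.1) (f p.2)
        have h6 := hMf p.1
        have h7 := hMf p.2
        linarith
      by_cases hy : p.2 ∈ K
      · by_cases hd : dist p.1 p.2 < δ
        · have hx1 : p.1 ∈ Metric.cthickening 1 K :=
            Metric.mem_cthickening_of_dist_le p.1 p.2 1 K hy (hd.le.trans hδ1)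
          have hy1 : p.2 ∈ Metric.cthickening 1 K :=
            Metric.mem_cthickening_of_dist_le p.2 p.2 1 K hy (by simp)
          have h8 := hδprop p.1 hx1 p.2 hy1 (lt_of_lt_of_le hd (min_le_left _ _))
          rw [Real.dist_eq] at h8
          linarith
        · push_neg at hd
          have hsq' : δ^2 ≤ dist p.1 p.2 ^ 2 := by
            nlinarith [dist_nonneg (x := p.1) (y := p.2)]
          have hc0 : 0 ≤ 2*‖f‖/δ^2 := by positivity
          have heq : 2*‖f‖/δ^2 * δ^2 = 2*‖f‖ := by field_simp
          have h3 : 2*‖f‖ ≤ 2*‖f‖/δ^2 * dist p.1 p.2 ^ 2 := by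
            calc 2*‖f‖ = 2*‖f‖/δ^2 * δ^2 := heq.symm
              _ ≤ 2*‖f‖/δ^2 * dist p.1 p.2 ^ 2 := mul_le_mul_of_nonneg_left hsq' hc0
          linarith
      · have hmem : p.2 ∈ Kᶜ := hy
        rw [Set.indicator_of_mem hmem]
        linarith
    have hKmeas : MeasurableSet Kᶜ := hKc.isClosed.measurableSet.compl
    have hindmeas : Measurable (fun p : E × E => Kᶜ.indicator (fun _ => (1:ℝ)) p.2) :=
      (measurable_const.indicator hKmeas).comp measurable_snd
    have hQle : ∀ n, (∫ p, |f p.1 - f p.2| ∂π n) ≤ ε/6 + 2*‖f‖*(μ Kᶜ).toReal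
        + 2*‖f‖/δ^2 * (∫ p, dist p.1 p.2 ^ 2 ∂π n) := by
      intro n
      haveI := hπprob n
      have hIind : Integrable (fun p : E × E => Kᶜ.indicator (fun _ => (1:ℝ)) p.2) (π n) :=
        integrable_bdd hindmeas.aestronglyMeasurable (C := 1) (fun p => by
          by_cases hp : p.2 ∈ Kᶜ <;> simp [hp])
      have hIa : Integrable (fun p : E × E =>
          ε/6 + 2*‖f‖ * Kᶜ.indicator (fun _ => (1:ℝ)) p.2) (π n) :=
        (integrable_const (ε/6)).add (hIind.const_mul (2*‖f‖))
      have hIb : Integrable (fun p : E × E => 2*‖f‖/δ^2 * dist p.1 p.2 ^ 2) (π n) :=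
        (Id2 n).const_mul (2*‖f‖/δ^2)
      have hInt2 : Integrable (fun p : E × E => ε/6 + 2*‖f‖ * Kᶜ.indicator (fun _ => (1:ℝ)) p.2
          + 2*‖f‖/δ^2 * dist p.1 p.2 ^ 2) (π n) := hIa.add hIb
      have hmono := integral_mono (hIQ n) hInt2 hpt
      rw [integral_add hIa hIb,
        integral_add (integrable_const (ε/6)) (hIind.const_mul (2*‖f‖)),
        integral_const, integral_const_mul, integral_const_mul] at hmono
      have hind_int : ∫ p, Kᶜ.indicator (fun _ => (1:ℝ)) p.2 ∂π n = (μ Kᶜ).toReal := by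
        rw [integral_snd_marginal (hsnd n) (measurable_const.indicator hKmeas).aestronglyMeasurable]
        exact integral_indicator_one hKmeas
      rw [hind_int] at hmono
      simpa [measure_univ] using hmono
    have hterm : Tendsto (fun n => 2*‖f‖/δ^2 * (∫ p, dist p.1 p.2 ^ 2 ∂π n)) atTop (nhds 0) := by
      have := han.const_mul (2*‖f‖/δ^2)
      simpa using this
    have h2Mterm : 2*‖f‖*(μ Kᶜ).toReal ≤ ε/3 := by
      have ht0' : (0:ℝ) ≤ (μ Kᶜ).toReal := ENNReal.toReal_nonneg
      have h1 : 2*(‖f‖+1)*(μ Kᶜ).toReal ≤ 2*(‖f‖+1)*(ε/(6*(‖f‖+1))) :=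
        mul_le_mul_of_nonneg_left hKsmall.le (by positivity)
      have h2' : 2*(‖f‖+1)*(ε/(6*(‖f‖+1))) = ε/3 := by field_simp; ring
      nlinarith
    filter_upwards [hterm.eventually (eventually_lt_nhds (show (0:ℝ) < ε/3 by positivity))]
      with n hn
    have h9 := hQle n
    linarith
  have hdiffeq : ∀ n, (∫ x, f x ∂((μs n).restrict (As n))) - ∫ x, f x ∂(μ.restrict A)
      = ∫ p, ((As n).indicator (fun _ => (1:ℝ)) p.1 * f p.1
          - A.indicator (fun _ => (1:ℝ)) p.2 * f p.2) ∂π n := by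
    intro n
    rw [hres1 n, hres2 n, ← integral_sub (I1 n) (I2 n)]
  have hdiff : Tendsto (fun n => (∫ x, f x ∂((μs n).restrict (As n)))
      - ∫ x, f x ∂(μ.restrict A)) atTop (nhds 0) := by
    rw [tendsto_zero_iff_norm_tendsto_zero]
    have hup : Tendsto (fun n => ‖f‖ * (∫ p,
        dist ((As n).indicator (fun _ => (1:ℝ)) p.1) (A.indicator (fun _ => (1:ℝ)) p.2) ^ 2 ∂π n)
        + ∫ p, |f p.1 - f p.2| ∂π n) atTop (nhds 0) := by
      have := (hbn.const_mul ‖f‖).add hQtend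
      simpa using this
    refine squeeze_zero (fun n => norm_nonneg _) (fun n => ?_) hup
    rw [Real.norm_eq_abs, hdiffeq n]
    calc |∫ p, ((As n).indicator (fun _ => (1:ℝ)) p.1 * f p.1
            - A.indicator (fun _ => (1:ℝ)) p.2 * f p.2) ∂π n|
        ≤ ∫ p, |(As n).indicator (fun _ => (1:ℝ)) p.1 * f p.1
            - A.indicator (fun _ => (1:ℝ)) p.2 * f p.2| ∂π n := by
          simpa [Real.norm_eq_abs] using
            norm_integral_le_integral_norm (μ := π n)
              (fun p : E × E => (As n).indicator (fun _ => (1:ℝ)) p.1 * f p.1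
                - A.indicator (fun _ => (1:ℝ)) p.2 * f p.2)
      _ ≤ ∫ p, (‖f‖ *
            dist ((As n).indicator (fun _ => (1:ℝ)) p.1) (A.indicator (fun _ => (1:ℝ)) p.2) ^ 2
            + |f p.1 - f p.2|) ∂π n :=
          integral_mono ((I1 n).sub (I2 n)).abs
            (((IΔ n).const_mul ‖f‖).add (hIQ n)) (fun p => hkey n p)
      _ = ‖f‖ * (∫ p,
            dist ((As n).indicator (fun _ => (1:ℝ)) p.1) (A.indicator (fun _ => (1:ℝ)) p.2) ^ 2
            ∂π n) + ∫ p, |f p.1 - f p.2| ∂π n := by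
          rw [integral_add ((IΔ n).const_mul ‖f‖) (hIQ n), integral_const_mul]
  have hfin := hdiff.add (tendsto_const_nhds (x := ∫ x, f x ∂(μ.restrict A)))
  simpa using hfin

theorem backward_half (μ : Measure E) [IsProbabilityMeasure μ]
    (h2 : Integrable (fun x => ‖x‖ ^ 2) μ)
    (μs : ℕ → Measure E)
    (hprob : ∀ n, IsProbabilityMeasure (μs n))
    (h2s : ∀ n, Integrable (fun x => ‖x‖ ^ 2) (μs n))
    (hW : Tendsto (fun n => wasserstein2 (μs n) μ) atTop (nhds 0))
    (A : Set E) (hA : MeasurableSet A)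
    (As : ℕ → Set E) (hAs : ∀ n, MeasurableSet (As n))
    (hw : ∀ f : BoundedContinuousFunction E ℝ,
        Tendsto (fun n => ∫ x, f x ∂((μs n).restrict (As n))) atTop
          (nhds (∫ x, f x ∂(μ.restrict A)))) :
    Tendsto (fun n => dTL2 (μs n) μ
        ((As n).indicator fun _ => (1 : ℝ)) (A.indicator fun _ => (1 : ℝ)))
      atTop (nhds 0) := by
  have mχA : Measurable (A.indicator fun _ => (1:ℝ)) := measurable_const.indicator hA
  have mχs : ∀ n, Measurable ((As n).indicator fun _ => (1:ℝ)) :=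
    fun n => measurable_const.indicator (hAs n)
  have χA01 : ∀ x, 0 ≤ A.indicator (fun _ => (1:ℝ)) x ∧ A.indicator (fun _ => (1:ℝ)) x ≤ 1 := by
    intro x; by_cases hx : x ∈ A <;> simp [hx]
  have χs01 : ∀ n x, 0 ≤ (As n).indicator (fun _ => (1:ℝ)) x ∧
      (As n).indicator (fun _ => (1:ℝ)) x ≤ 1 := by
    intro n x; by_cases hx : x ∈ As n <;> simp [hx]
  have hsel : ∀ n, ∃ π : Measure (E × E), π.fst = μs n ∧ π.snd = μ ∧
      Real.sqrt (∫ p, dist p.1 p.2 ^ 2 ∂π) < wasserstein2 (μs n) μ + 1/((n:ℝ)+1) := by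
    intro n
    haveI := hprob n
    exact exists_coupling_W2 (μs n) μ (by positivity)
  choose π hfst hsnd hlt using hsel
  have hπprob : ∀ n, IsProbabilityMeasure (π n) := fun n => by
    haveI := hprob n; exact coupling_isProbabilityMeasure (hfst n)
  have Id2 : ∀ n, Integrable (fun p : E × E => dist p.1 p.2 ^ 2) (π n) :=
    fun n => integrable_dist_sq (hfst n) (hsnd n) (h2s n) h2
  have ha0 : ∀ n, 0 ≤ ∫ p, dist p.1 p.2 ^ 2 ∂π n :=
    fun n => integral_nonneg fun p => by positivity
  have han : Tendsto (fun n => ∫ p, dist p.1 p.2 ^ 2 ∂π n) atTop (nhds 0) := by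
    have hup : Tendsto (fun n => (wasserstein2 (μs n) μ + 1/((n:ℝ)+1)) ^ 2) atTop (nhds 0) := by
      have h1 := hW.add tendsto_one_div_add_atTop_nhds_zero_nat
      have h2' := h1.pow 2
      simpa using h2'
    refine squeeze_zero ha0 (fun n => ?_) hup
    calc (∫ p, dist p.1 p.2 ^ 2 ∂π n)
        = Real.sqrt (∫ p, dist p.1 p.2 ^ 2 ∂π n) ^ 2 := (Real.sq_sqrt (ha0 n)).symm
      _ ≤ (wasserstein2 (μs n) μ + 1/((n:ℝ)+1)) ^ 2 :=
          pow_le_pow_left₀ (Real.sqrt_nonneg _) (hlt n).le 2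
  have mΔ : ∀ n, Measurable (fun p : E × E =>
      dist ((As n).indicator (fun _ => (1:ℝ)) p.1) (A.indicator (fun _ => (1:ℝ)) p.2) ^ 2) :=
    fun n => (((mχs n).comp measurable_fst).dist (mχA.comp measurable_snd)).pow_const 2
  have IΔ : ∀ n, Integrable (fun p : E × E =>
      dist ((As n).indicator (fun _ => (1:ℝ)) p.1) (A.indicator (fun _ => (1:ℝ)) p.2) ^ 2)
      (π n) := by
    intro n
    haveI := hπprob n
    refine integrable_bdd (mΔ n).aestronglyMeasurable (C := 1) fun p => ?_
    obtain ⟨ha0', ha1⟩ := χs01 n p.1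
    obtain ⟨hb0', hb1⟩ := χA01 p.2
    rw [abs_of_nonneg (by positivity), Real.dist_eq]
    have h1 : |(As n).indicator (fun _ => (1:ℝ)) p.1 - A.indicator (fun _ => (1:ℝ)) p.2| ≤ 1 := by
      rw [abs_le]; constructor <;> linarith
    have := pow_le_pow_left₀ (abs_nonneg _) h1 2
    simpa using this
  have Iχ1 : ∀ n, Integrable (fun p : E × E => (As n).indicator (fun _ => (1:ℝ)) p.1) (π n) := by
    intro n
    haveI := hπprob n
    refine integrable_bdd ((mχs n).comp measurable_fst).aestronglyMeasurable (C := 1) fun p => ?_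
    obtain ⟨h0', h1'⟩ := χs01 n p.1
    rw [abs_of_nonneg h0']; exact h1'
  have Iχ2 : ∀ n, Integrable (fun p : E × E => A.indicator (fun _ => (1:ℝ)) p.2) (π n) := by
    intro n
    haveI := hπprob n
    refine integrable_bdd (mχA.comp measurable_snd).aestronglyMeasurable (C := 1) fun p => ?_
    obtain ⟨h0', h1'⟩ := χA01 p.2
    rw [abs_of_nonneg h0']; exact h1'
  have Iχχ : ∀ n, Integrable (fun p : E × E =>
      (As n).indicator (fun _ => (1:ℝ)) p.1 * A.indicator (fun _ => (1:ℝ)) p.2) (π n) := by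
    intro n
    haveI := hπprob n
    refine integrable_bdd (((mχs n).comp measurable_fst).mul
      (mχA.comp measurable_snd)).aestronglyMeasurable (C := 1) fun p => ?_
    obtain ⟨h0', h1'⟩ := χs01 n p.1
    obtain ⟨h2', h3'⟩ := χA01 p.2
    rw [abs_of_nonneg (mul_nonneg h0' h2')]
    nlinarith
  have hμAn_eq : ∀ n, ∫ p, (As n).indicator (fun _ => (1:ℝ)) p.1 ∂π n
      = ((μs n) (As n)).toReal := by
    intro n
    rw [integral_fst_marginal (hfst n) (mχs n).aestronglyMeasurable]
    exact integral_indicator_one (hAs n)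
  have hμA_eq : ∀ n, ∫ p, A.indicator (fun _ => (1:ℝ)) p.2 ∂π n = (μ A).toReal := by
    intro n
    rw [integral_snd_marginal (hsnd n) mχA.aestronglyMeasurable]
    exact integral_indicator_one hA
  have hbexp : ∀ n, (∫ p,
      dist ((As n).indicator (fun _ => (1:ℝ)) p.1) (A.indicator (fun _ => (1:ℝ)) p.2) ^ 2 ∂π n)
      = ((μs n) (As n)).toReal + (μ A).toReal
        - 2 * ∫ p, (As n).indicator (fun _ => (1:ℝ)) p.1 * A.indicator (fun _ => (1:ℝ)) p.2
          ∂π n := by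
    intro n
    haveI := hπprob n
    have hpt : ∀ p : E × E,
        dist ((As n).indicator (fun _ => (1:ℝ)) p.1) (A.indicator (fun _ => (1:ℝ)) p.2) ^ 2
        = (As n).indicator (fun _ => (1:ℝ)) p.1 + A.indicator (fun _ => (1:ℝ)) p.2
          - 2 * ((As n).indicator (fun _ => (1:ℝ)) p.1 * A.indicator (fun _ => (1:ℝ)) p.2) := by
      intro p
      rcases Classical.em (p.1 ∈ As n) with h1 | h1 <;>
        rcases Classical.em (p.2 ∈ A) with h2' | h2'
      · rw [Set.indicator_of_mem h1, Set.indicator_of_mem h2']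
        norm_num [dist_self]
      · rw [Set.indicator_of_mem h1, Set.indicator_of_notMem h2']
        rw [Real.dist_eq]
        norm_num
      · rw [Set.indicator_of_notMem h1, Set.indicator_of_mem h2']
        rw [Real.dist_eq]
        norm_num
      · rw [Set.indicator_of_notMem h1, Set.indicator_of_notMem h2']
        simp
    have hIsum : Integrable (fun p : E × E =>
        (As n).indicator (fun _ => (1:ℝ)) p.1 + A.indicator (fun _ => (1:ℝ)) p.2) (π n) :=
      (Iχ1 n).add (Iχ2 n)
    have hI2 : Integrable (fun p : E × E => 2 *
        ((As n).indicator (fun _ => (1:ℝ)) p.1 * A.indicator (fun _ => (1:ℝ)) p.2)) (π n) :=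
      (Iχχ n).const_mul 2
    calc (∫ p, dist ((As n).indicator (fun _ => (1:ℝ)) p.1)
            (A.indicator (fun _ => (1:ℝ)) p.2) ^ 2 ∂π n)
        = ∫ p, ((As n).indicator (fun _ => (1:ℝ)) p.1 + A.indicator (fun _ => (1:ℝ)) p.2
            - 2 * ((As n).indicator (fun _ => (1:ℝ)) p.1 * A.indicator (fun _ => (1:ℝ)) p.2))
            ∂π n := by simp only [hpt]
      _ = (∫ p, ((As n).indicator (fun _ => (1:ℝ)) p.1 + A.indicator (fun _ => (1:ℝ)) p.2) ∂π n)
            - ∫ p, 2 * ((As n).indicator (fun _ => (1:ℝ)) p.1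
              * A.indicator (fun _ => (1:ℝ)) p.2) ∂π n := integral_sub hIsum hI2
      _ = ((μs n) (As n)).toReal + (μ A).toReal
            - 2 * ∫ p, (As n).indicator (fun _ => (1:ℝ)) p.1
              * A.indicator (fun _ => (1:ℝ)) p.2 ∂π n := by
          rw [integral_add (Iχ1 n) (Iχ2 n), integral_const_mul, hμAn_eq n, hμA_eq n]
  have hμAnt : Tendsto (fun n => ((μs n) (As n)).toReal) atTop (nhds (μ A).toReal) := by
    have h1 := hw (BoundedContinuousFunction.const E (1:ℝ))
    have e1 : ∀ (ν : Measure E) (S : Set E),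
        (∫ x, (BoundedContinuousFunction.const E (1:ℝ)) x ∂ν.restrict S) = (ν S).toReal := by
      intro ν S
      simp [Measure.restrict_apply_univ, Measure.real]
    simp only [e1] at h1
    exact h1
  have hb0 : ∀ n, 0 ≤ ∫ p,
      dist ((As n).indicator (fun _ => (1:ℝ)) p.1) (A.indicator (fun _ => (1:ℝ)) p.2) ^ 2 ∂π n :=
    fun n => integral_nonneg fun p => by positivity
  have hbn : Tendsto (fun n => ∫ p,
      dist ((As n).indicator (fun _ => (1:ℝ)) p.1) (A.indicator (fun _ => (1:ℝ)) p.2) ^ 2 ∂π n)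
      atTop (nhds 0) := by
    apply tendsto_zero_of_ev hb0
    intro ε hε
    have hε' : (0:ℝ) < ε/16 := by positivity
    obtain ⟨U, hAU, hUopen, -, hUlt⟩ := hA.exists_isOpen_diff_lt (measure_ne_top μ A)
      (ne_of_gt (ENNReal.ofReal_pos.2 hε'))
    obtain ⟨K, hKA, hKc, hKlt⟩ := hA.exists_isCompact_diff_lt (measure_ne_top μ A)
      (ne_of_gt (ENNReal.ofReal_pos.2 hε'))
    have hUA : (μ (U \ A)).toReal < ε/16 := by
      have h1 := ENNReal.toReal_strict_mono ENNReal.ofReal_ne_top hUlt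
      rwa [ENNReal.toReal_ofReal hε'.le] at h1
    have hAK : (μ (A \ K)).toReal < ε/16 := by
      have h1 := ENNReal.toReal_strict_mono ENNReal.ofReal_ne_top hKlt
      rwa [ENNReal.toReal_ofReal hε'.le] at h1
    have hμA_le : (μ A).toReal ≤ (μ K).toReal + ε/16 := by
      have h1 : μ A ≤ μ K + μ (A \ K) := by
        conv_lhs => rw [show A = K ∪ (A \ K) from (Set.union_diff_cancel hKA).symm]
        exact measure_union_le _ _
      calc (μ A).toReal ≤ (μ K + μ (A \ K)).toReal :=
            ENNReal.toReal_mono (ENNReal.add_ne_top.2 ⟨measure_ne_top _ _, measure_ne_top _ _⟩) h1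
        _ = (μ K).toReal + (μ (A \ K)).toReal :=
            ENNReal.toReal_add (measure_ne_top _ _) (measure_ne_top _ _)
        _ ≤ (μ K).toReal + ε/16 := by linarith
    have hc0 : ∀ n, 0 ≤ ∫ p, (As n).indicator (fun _ => (1:ℝ)) p.1
        * A.indicator (fun _ => (1:ℝ)) p.2 ∂π n := by
      intro n
      refine integral_nonneg fun p => mul_nonneg (χs01 n p.1).1 (χA01 p.2).1
    rcases Set.eq_empty_or_nonempty K with hKe | hKne
    · have hK0 : (μ K).toReal = 0 := by simp [hKe]
      have hμAsmall : (μ A).toReal < 2*(ε/16) := by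
        rw [hK0] at hμA_le; linarith
      filter_upwards [hμAnt.eventually (eventually_lt_nhds
        (show (μ A).toReal < (μ A).toReal + ε/16 by linarith))] with n hn
      rw [hbexp n]
      have h5 := hc0 n
      linarith
    · obtain ⟨g, r, hr, gcont, g0, g1, gK, gU, glip⟩ :=
        urysohn_aux hKc hKne hUopen (hKA.trans hAU)
      have hgm : Measurable g := gcont.measurable
      set G : BoundedContinuousFunction E ℝ :=
        BoundedContinuousFunction.ofNormedAddCommGroup g gcont 1
          (fun x => by rw [Real.norm_eq_abs, abs_of_nonneg (g0 x)]; exact g1 x) with hGdef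
      have hGcoe : ⇑G = g := by
        rw [hGdef]
        exact BoundedContinuousFunction.coe_ofNormedAddCommGroup g gcont 1 _
      have hGt := hw G
      have hL : (μ A).toReal - 2*(ε/16) ≤ ∫ x, G x ∂(μ.restrict A) := by
        have h1 : ∫ x, K.indicator (fun _ => (1:ℝ)) x ∂μ.restrict A
            ≤ ∫ x, G x ∂μ.restrict A := by
          apply integral_mono
          · exact integrable_bdd (measurable_const.indicator
              hKc.isClosed.measurableSet).aestronglyMeasurable (C := 1)
              (fun x => by by_cases hx : x ∈ K <;> simp [hx])
          · have hgi : Integrable g (μ.restrict A) :=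
              integrable_bdd gcont.measurable.aestronglyMeasurable (C := 1)
                (fun x => by rw [abs_of_nonneg (g0 x)]; exact g1 x)
            exact hgi.congr (Filter.Eventually.of_forall fun x => (congrFun hGcoe x).symm)
          · intro x
            by_cases hx : x ∈ K
            · rw [Set.indicator_of_mem hx]
              have : G x = g x := by rw [hGcoe]
              rw [this, gK x hx]
            · rw [Set.indicator_of_notMem hx]
              have : G x = g x := by rw [hGcoe]
              rw [this]
              exact g0 x
        have h2 : ∫ x, K.indicator (fun _ => (1:ℝ)) x ∂μ.restrict A = (μ K).toReal := by
          have h6 : ∫ x, K.indicator (fun _ => (1:ℝ)) x ∂μ.restrict A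
              = ((μ.restrict A) K).toReal := integral_indicator_one hKc.isClosed.measurableSet
          rw [h6, Measure.restrict_apply hKc.isClosed.measurableSet, Set.inter_eq_left.2 hKA]
        linarith
      have hUAmeas : MeasurableSet (U \ A) := hUopen.measurableSet.diff hA
      have hIg2 : ∀ n, Integrable (fun p : E × E =>
          (As n).indicator (fun _ => (1:ℝ)) p.1 * g p.2) (π n) := by
        intro n
        haveI := hπprob n
        refine integrable_bdd (((mχs n).comp measurable_fst).mul
          (hgm.comp measurable_snd)).aestronglyMeasurable (C := 1) fun p => ?_
        obtain ⟨h0', h1'⟩ := χs01 n p.1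
        rw [abs_of_nonneg (mul_nonneg h0' (g0 p.2))]
        nlinarith [g0 p.2, g1 p.2]
      have hIg1 : ∀ n, Integrable (fun p : E × E =>
          (As n).indicator (fun _ => (1:ℝ)) p.1 * g p.1) (π n) := by
        intro n
        haveI := hπprob n
        refine integrable_bdd (((mχs n).comp measurable_fst).mul
          (hgm.comp measurable_fst)).aestronglyMeasurable (C := 1) fun p => ?_
        obtain ⟨h0', h1'⟩ := χs01 n p.1
        rw [abs_of_nonneg (mul_nonneg h0' (g0 p.1))]
        nlinarith [g0 p.1, g1 p.1]
      have hIabs : ∀ n, Integrable (fun p : E × E => |g p.1 - g p.2|) (π n) := by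
        intro n
        haveI := hπprob n
        refine integrable_bdd ((hgm.comp measurable_fst).sub
          (hgm.comp measurable_snd)).abs.aestronglyMeasurable (C := 2) fun p => ?_
        rw [abs_abs]
        have h5 := abs_sub (g p.1) (g p.2)
        have h6 : |g p.1| ≤ 1 := by rw [abs_of_nonneg (g0 p.1)]; exact g1 p.1
        have h7 : |g p.2| ≤ 1 := by rw [abs_of_nonneg (g0 p.2)]; exact g1 p.2
        linarith
      have hIind : ∀ n, Integrable (fun p : E × E =>
          (U \ A).indicator (fun _ => (1:ℝ)) p.2) (π n) := by
        intro n
        haveI := hπprob n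
        refine integrable_bdd ((measurable_const.indicator hUAmeas).comp
          measurable_snd).aestronglyMeasurable (C := 1) fun p => ?_
        by_cases hp : p.2 ∈ U \ A <;> simp [hp]
      have hstep1 : ∀ n, (∫ p, (As n).indicator (fun _ => (1:ℝ)) p.1 * g p.2 ∂π n)
          - (μ (U \ A)).toReal
          ≤ ∫ p, (As n).indicator (fun _ => (1:ℝ)) p.1 * A.indicator (fun _ => (1:ℝ)) p.2
            ∂π n := by
        intro n
        haveI := hπprob n
        have hptw : ∀ p : E × E, (As n).indicator (fun _ => (1:ℝ)) p.1 * g p.2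
            - (U \ A).indicator (fun _ => (1:ℝ)) p.2
            ≤ (As n).indicator (fun _ => (1:ℝ)) p.1 * A.indicator (fun _ => (1:ℝ)) p.2 := by
          intro p
          obtain ⟨hx0, hx1⟩ := χs01 n p.1
          by_cases hy : p.2 ∈ A
          · have hyn : p.2 ∉ U \ A := fun h => h.2 hy
            rw [Set.indicator_of_mem hy, Set.indicator_of_notMem hyn]
            have h5 : (As n).indicator (fun _ => (1:ℝ)) p.1 * g p.2
                ≤ (As n).indicator (fun _ => (1:ℝ)) p.1 * 1 :=
              mul_le_mul_of_nonneg_left (g1 p.2) hx0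
            linarith
          · rw [Set.indicator_of_notMem hy]
            by_cases hyU : p.2 ∈ U
            · have hymem : p.2 ∈ U \ A := ⟨hyU, hy⟩
              rw [Set.indicator_of_mem hymem]
              nlinarith [g0 p.2, g1 p.2]
            · rw [gU p.2 hyU, Set.indicator_of_notMem (fun h => hyU (Set.mem_of_mem_diff h))]
              simp
        have hsubInt : Integrable (fun p : E × E =>
            (As n).indicator (fun _ => (1:ℝ)) p.1 * g p.2
            - (U \ A).indicator (fun _ => (1:ℝ)) p.2) (π n) := (hIg2 n).sub (hIind n)
        have h5 := integral_mono hsubInt (Iχχ n) hptw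
        rw [integral_sub (hIg2 n) (hIind n)] at h5
        have hindval : ∫ p, (U \ A).indicator (fun _ => (1:ℝ)) p.2 ∂π n
            = (μ (U \ A)).toReal := by
          rw [integral_snd_marginal (hsnd n)
            (measurable_const.indicator hUAmeas).aestronglyMeasurable]
          exact integral_indicator_one hUAmeas
        rw [hindval] at h5
        exact h5
      have hstep2 : ∀ n, (∫ p, (As n).indicator (fun _ => (1:ℝ)) p.1 * g p.1 ∂π n)
          - (∫ p, |g p.1 - g p.2| ∂π n)
          ≤ ∫ p, (As n).indicator (fun _ => (1:ℝ)) p.1 * g p.2 ∂π n := by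
        intro n
        haveI := hπprob n
        have hptw : ∀ p : E × E, (As n).indicator (fun _ => (1:ℝ)) p.1 * g p.1
            - |g p.1 - g p.2| ≤ (As n).indicator (fun _ => (1:ℝ)) p.1 * g p.2 := by
          intro p
          obtain ⟨hx0, hx1⟩ := χs01 n p.1
          have h6 : (As n).indicator (fun _ => (1:ℝ)) p.1 * (g p.1 - g p.2)
              ≤ |g p.1 - g p.2| := by
            calc (As n).indicator (fun _ => (1:ℝ)) p.1 * (g p.1 - g p.2)
                ≤ |(As n).indicator (fun _ => (1:ℝ)) p.1 * (g p.1 - g p.2)| := le_abs_self _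
              _ = |(As n).indicator (fun _ => (1:ℝ)) p.1| * |g p.1 - g p.2| := abs_mul _ _
              _ ≤ 1 * |g p.1 - g p.2| := by
                  refine mul_le_mul_of_nonneg_right ?_ (abs_nonneg _)
                  rw [abs_of_nonneg hx0]; exact hx1
              _ = |g p.1 - g p.2| := one_mul _
          nlinarith
        have hsubInt : Integrable (fun p : E × E =>
            (As n).indicator (fun _ => (1:ℝ)) p.1 * g p.1 - |g p.1 - g p.2|) (π n) :=
          (hIg1 n).sub (hIabs n)
        have h5 := integral_mono hsubInt (hIg2 n) hptw
        rw [integral_sub (hIg1 n) (hIabs n)] at h5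
        exact h5
      have hGn : ∀ n, ∫ x, G x ∂((μs n).restrict (As n))
          = ∫ p, (As n).indicator (fun _ => (1:ℝ)) p.1 * g p.1 ∂π n := by
        intro n
        have h5 : ∫ x, G x ∂((μs n).restrict (As n)) = ∫ x, g x ∂((μs n).restrict (As n)) := by
          rw [hGcoe]
        rw [h5, integral_restrict_eq_indicator_mul (μs n) (hAs n) g]
        exact (integral_fst_marginal (hfst n) ((mχs n).mul hgm).aestronglyMeasurable).symm
      have hEbound : ∀ n, (∫ p, |g p.1 - g p.2| ∂π n)
          ≤ ε/16 + (1/(r^2*(ε/16))) * ∫ p, dist p.1 p.2 ^ 2 ∂π n := by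
        intro n
        haveI := hπprob n
        have hptw : ∀ p : E × E, |g p.1 - g p.2|
            ≤ ε/16 + (1/(r^2*(ε/16))) * dist p.1 p.2 ^ 2 := by
          intro p
          have h1 := glip p.1 p.2
          have h2 := le_add_sq_div (t := dist p.1 p.2 / r) (c := ε/16)
            (div_nonneg dist_nonneg hr.le) hε'
          have h3 : (dist p.1 p.2 / r)^2/(ε/16) = 1/(r^2*(ε/16)) * dist p.1 p.2 ^ 2 := by
            field_simp
          linarith [h3]
        have hIrhs : Integrable (fun p : E × E =>
            ε/16 + (1/(r^2*(ε/16))) * dist p.1 p.2 ^ 2) (π n) :=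
          (integrable_const (ε/16)).add ((Id2 n).const_mul (1/(r^2*(ε/16))))
        have h5 := integral_mono (hIabs n) hIrhs hptw
        rw [integral_add (integrable_const (ε/16)) ((Id2 n).const_mul (1/(r^2*(ε/16)))),
          integral_const, integral_const_mul] at h5
        simpa [measure_univ] using h5
      have hev1 : ∀ᶠ n in atTop, ((μs n) (As n)).toReal < (μ A).toReal + ε/16 :=
        hμAnt.eventually (eventually_lt_nhds (by linarith))
      have hev2 : ∀ᶠ n in atTop, (μ A).toReal - 3*(ε/16)
          < ∫ x, G x ∂((μs n).restrict (As n)) :=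
        hGt.eventually (eventually_gt_nhds (by linarith))
      have hev3 : ∀ᶠ n in atTop, (1/(r^2*(ε/16))) * (∫ p, dist p.1 p.2 ^ 2 ∂π n) < ε/16 := by
        have h1 : Tendsto (fun n => (1/(r^2*(ε/16))) * (∫ p, dist p.1 p.2 ^ 2 ∂π n))
            atTop (nhds 0) := by
          have h0 := han.const_mul (1/(r^2*(ε/16)))
          rwa [mul_zero] at h0
        exact h1.eventually (eventually_lt_nhds hε')
      filter_upwards [hev1, hev2, hev3] with n h1 h2 h3
      rw [hbexp n]
      have hc1 := hstep1 n
      have hc2 := hstep2 n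
      have hE := hEbound n
      have hG := hGn n
      rw [hG] at h2
      linarith
  have hle : ∀ n, dTL2 (μs n) μ ((As n).indicator fun _ => (1:ℝ))
      (A.indicator fun _ => (1:ℝ))
      ≤ Real.sqrt ((∫ p, dist p.1 p.2 ^ 2 ∂π n) + ∫ p,
        dist ((As n).indicator (fun _ => (1:ℝ)) p.1) (A.indicator (fun _ => (1:ℝ)) p.2) ^ 2
        ∂π n) := by
    intro n
    haveI := hprob n
    have h1 := dTL2_le (μs n) μ ((As n).indicator fun _ => (1:ℝ))
      (A.indicator fun _ => (1:ℝ)) (hfst n) (hsnd n)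
    rwa [integral_add (Id2 n) (IΔ n)] at h1
  have hub : Tendsto (fun n => Real.sqrt ((∫ p, dist p.1 p.2 ^ 2 ∂π n) + ∫ p,
      dist ((As n).indicator (fun _ => (1:ℝ)) p.1) (A.indicator (fun _ => (1:ℝ)) p.2) ^ 2
      ∂π n)) atTop (nhds 0) := by
    have h1 : Tendsto (fun n => (∫ p, dist p.1 p.2 ^ 2 ∂π n) + ∫ p,
        dist ((As n).indicator (fun _ => (1:ℝ)) p.1) (A.indicator (fun _ => (1:ℝ)) p.2) ^ 2
        ∂π n) atTop (nhds 0) := by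
      have := han.add hbn
      simpa using this
    have h2 : Tendsto Real.sqrt (nhds 0) (nhds 0) := by
      have := Real.continuous_sqrt.tendsto 0
      simpa using this
    exact h2.comp h1
  exact squeeze_zero (fun n => by haveI := hprob n; exact dTL2_nonneg (μs n) μ _ _) hle hub

end Main

/-- If `μ_n → μ` in the Wasserstein sense, then `(μ_n, χ_{A_n}) → (μ, χ_A)` in `TL²` iff the
restricted measures `μ_n⌊A_n` converge weakly to `μ⌊A`. -/
theorem indicator_TL2_iff_weak_conv_of_restrictions (N : ℕ)
    (μ : Measure (EuclideanSpace ℝ (Fin N))) [IsProbabilityMeasure μ]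
    (h2 : Integrable (fun x => ‖x‖ ^ 2) μ)
    (μs : ℕ → Measure (EuclideanSpace ℝ (Fin N)))
    (hprob : ∀ n, IsProbabilityMeasure (μs n))
    (h2s : ∀ n, Integrable (fun x => ‖x‖ ^ 2) (μs n))
    (hW : Tendsto (fun n => wasserstein2 (μs n) μ) atTop (nhds 0))
    (A : Set (EuclideanSpace ℝ (Fin N))) (hA : MeasurableSet A)
    (As : ℕ → Set (EuclideanSpace ℝ (Fin N))) (hAs : ∀ n, MeasurableSet (As n)) :
    Tendsto (fun n => dTL2 (μs n) μ
        ((As n).indicator fun _ => (1 : ℝ)) (A.indicator fun _ => (1 : ℝ)))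
      atTop (nhds 0)
    ↔ ∀ f : BoundedContinuousFunction (EuclideanSpace ℝ (Fin N)) ℝ,
        Tendsto (fun n => ∫ x, f x ∂((μs n).restrict (As n))) atTop
          (nhds (∫ x, f x ∂(μ.restrict A))) := by
  constructor
  · intro h f
    exact forward_half μ h2 μs hprob h2s A hA As hAs h f
  · intro h
    exact backward_half μ h2 μs hprob h2s hW A hA As hAs h
end
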